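/- arXiv:2007.14802 — 9 statements merged into one kernel-verified Lean document; each statement's English description precedes it below -/
import Mathlib

section
/- The modified Barenblatt density profile verifies the porous media equation with time-dependent dissipation: if ρ̄(x,t) = (1+t)^{-(1+λ)/(γ+1)} [A − B(1+t)^{-2(1+λ)/(γ+1)} x²]^{1/(γ-1)} with B = μ(1+λ)(γ−1)/(2(γ+1)), then ∂_t ρ̄ = ((1+t)^λ/μ) ∂_x² (ρ̄^γ/γ) wherever A − B(1+t)^{-2(1+λ)/(γ+1)} x² > 0. -/
open Real

/-- The modified Barenblatt density profile solves the porous media equation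
with time-dependent dissipation wherever the bracket is positive. -/
theorem stmt_0 (γ lam μ A B : ℝ) (hγ : 1 < γ) (hlam0 : 0 < lam) (hlam1 : lam ≤ 1)
    (hμ : 0 < μ) (hA : 0 < A)
    (hB : B = μ * (1 + lam) * (γ - 1) / (2 * (γ + 1)))
    (ρ : ℝ → ℝ → ℝ)
    (hρ : ∀ x t : ℝ, ρ x t =
      (1 + t) ^ (-(1 + lam) / (γ + 1)) *
        (A - B * (1 + t) ^ (-(2 * (1 + lam)) / (γ + 1)) * x ^ 2) ^ (1 / (γ - 1))) :
    ∀ x t : ℝ, 0 ≤ t →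
      0 < A - B * (1 + t) ^ (-(2 * (1 + lam)) / (γ + 1)) * x ^ 2 →
      deriv (fun s => ρ x s) t =
        ((1 + t) ^ lam / μ) *
          deriv (fun y => deriv (fun z => (ρ z t) ^ γ / γ) y) x := by
  intro x t ht hpos
  have hγ1 : (0:ℝ) < γ - 1 := by linarith
  have hγ1' : (0:ℝ) < γ + 1 := by linarith
  have hγ0 : (0:ℝ) < γ := by linarith
  have hT : (0:ℝ) < 1 + t := by linarith
  set c1 : ℝ := -(1 + lam) / (γ + 1) with hc1def
  set c2 : ℝ := -(2 * (1 + lam)) / (γ + 1) with hc2def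
  set e : ℝ := 1 / (γ - 1) with hedef
  set G : ℝ := A - B * (1 + t) ^ c2 * x ^ 2 with hGdef
  -- time derivative
  have hPow : ∀ c : ℝ, HasDerivAt (fun s : ℝ => (1 + s) ^ c)
      (1 * c * (1 + t) ^ (c - 1)) t := fun c =>
    ((hasDerivAt_id t).const_add 1).rpow_const (Or.inl hT.ne')
  have hGt : HasDerivAt (fun s : ℝ => A - B * (1 + s) ^ c2 * x ^ 2)
      (-(B * (1 * c2 * (1 + t) ^ (c2 - 1)) * x ^ 2)) t :=
    (((hPow c2).const_mul B).mul_const (x ^ 2)).const_sub A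
  have hGe : HasDerivAt (fun s : ℝ => (A - B * (1 + s) ^ c2 * x ^ 2) ^ e)
      (-(B * (1 * c2 * (1 + t) ^ (c2 - 1)) * x ^ 2) * e * G ^ (e - 1)) t :=
    hGt.rpow_const (Or.inl hpos.ne')
  have hρx : (fun s => ρ x s)
      = fun s : ℝ => (1 + s) ^ c1 * (A - B * (1 + s) ^ c2 * x ^ 2) ^ e := by
    funext s; exact hρ x s
  have hL : HasDerivAt (fun s => ρ x s)
      (1 * c1 * (1 + t) ^ (c1 - 1) * G ^ e
        + (1 + t) ^ c1 * (-(B * (1 * c2 * (1 + t) ^ (c2 - 1)) * x ^ 2) * e * G ^ (e - 1))) t := by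
    rw [hρx]
    exact (hPow c1).mul hGe
  -- spatial derivatives
  have hU : IsOpen {z : ℝ | 0 < A - B * (1 + t) ^ c2 * z ^ 2} :=
    isOpen_lt continuous_const (by continuity)
  have hgz : ∀ y : ℝ, HasDerivAt (fun z : ℝ => A - B * (1 + t) ^ c2 * z ^ 2)
      (-(B * (1 + t) ^ c2 * (2 * y))) y := by
    intro y
    have h1 : HasDerivAt (fun z : ℝ => z ^ 2) (2 * y) y := by
      simpa using hasDerivAt_pow 2 y
    exact (h1.const_mul (B * (1 + t) ^ c2)).const_sub A
  have hD : (0:ℝ) < (1 + t) ^ c1 := rpow_pos_of_pos hT _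
  have hderiv_inner : ∀ y : ℝ, 0 < A - B * (1 + t) ^ c2 * y ^ 2 →
      deriv (fun z => ρ z t ^ γ / γ) y
        = ((1 + t) ^ c1) ^ γ / γ *
            (-(B * (1 + t) ^ c2 * (2 * y)) * (e * γ)
              * (A - B * (1 + t) ^ c2 * y ^ 2) ^ (e * γ - 1)) := by
    intro y hy
    have hHd : HasDerivAt
        (fun z : ℝ => ((1 + t) ^ c1) ^ γ / γ * (A - B * (1 + t) ^ c2 * z ^ 2) ^ (e * γ))
        (((1 + t) ^ c1) ^ γ / γ *
          (-(B * (1 + t) ^ c2 * (2 * y)) * (e * γ)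
            * (A - B * (1 + t) ^ c2 * y ^ 2) ^ (e * γ - 1))) y :=
      ((hgz y).rpow_const (Or.inl hy.ne')).const_mul _
    have hEv : (fun z => ρ z t ^ γ / γ)
        =ᶠ[nhds y] fun z : ℝ =>
          ((1 + t) ^ c1) ^ γ / γ * (A - B * (1 + t) ^ c2 * z ^ 2) ^ (e * γ) := by
      filter_upwards [hU.mem_nhds hy] with z hz
      rw [hρ z t, Real.mul_rpow hD.le (Real.rpow_nonneg hz.le _), ← Real.rpow_mul hz.le]
      ring
    exact (hHd.congr_of_eventuallyEq hEv).deriv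
  have hx : x ∈ {z : ℝ | 0 < A - B * (1 + t) ^ c2 * z ^ 2} := hpos
  set K : ℝ := -(((1 + t) ^ c1) ^ γ / γ * (B * (1 + t) ^ c2) * 2 * (e * γ)) with hKdef
  have hOuterEv : (fun y => deriv (fun z => ρ z t ^ γ / γ) y)
      =ᶠ[nhds x] fun y : ℝ => K * (y * (A - B * (1 + t) ^ c2 * y ^ 2) ^ (e * γ - 1)) := by
    filter_upwards [hU.mem_nhds hx] with y hy
    rw [hderiv_inner y hy, hKdef]; ring
  have hm : e * γ - 1 = e := by rw [hedef]; field_simp; ring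
  have hbase : HasDerivAt
      (fun y : ℝ => K * (y * (A - B * (1 + t) ^ c2 * y ^ 2) ^ (e * γ - 1)))
      (K * (1 * G ^ (e * γ - 1)
        + x * (-(B * (1 + t) ^ c2 * (2 * x)) * (e * γ - 1) * G ^ (e * γ - 1 - 1)))) x :=
    ((hasDerivAt_id x).mul ((hgz x).rpow_const (Or.inl hpos.ne'))).const_mul K
  rw [hL.deriv, hOuterEv.deriv_eq, hbase.deriv, hKdef, hm]
  -- now pure algebra with rpow
  have hq1 : (1 + t) ^ c1 = (1 + t) ^ (c1 - 1) * (1 + t) := by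
    rw [Real.rpow_sub hT, Real.rpow_one, div_mul_cancel₀ _ hT.ne']
  have hq2 : (1 + t) ^ (c2 - 1) = (1 + t) ^ c2 / (1 + t) := by
    rw [Real.rpow_sub hT, Real.rpow_one]
  have hq3 : ((1 + t) ^ c1) ^ γ
      = (1 + t) ^ (c1 - 1) / ((1 + t) ^ c2 * (1 + t) ^ lam) := by
    rw [← Real.rpow_mul hT.le, ← Real.rpow_add hT, ← Real.rpow_sub hT]
    congr 1
    rw [hc1def, hc2def]
    field_simp
    ring
  rw [hq3, hq2, hq1]
  have hs : (0:ℝ) < (1 + t) ^ c2 := rpow_pos_of_pos hT _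
  have hLam : (0:ℝ) < (1 + t) ^ lam := rpow_pos_of_pos hT _
  have hu : (0:ℝ) < (1 + t) ^ (c1 - 1) := rpow_pos_of_pos hT _
  have hc1B : c1 = -(2 * B * e) / μ := by
    rw [hc1def, hedef, hB]; field_simp
  have hc2B : c2 = 2 * c1 := by rw [hc1def, hc2def]; ring
  rw [hc2B, hc1B, hedef, hB]
  field_simp
  ring
end

section
/- For η̄_x(t) = (1+t)^{(λ+1)/(γ+1)}, the function η̄(x,t) = x η̄_x(t) satisfies the exact relation (μ/(1+t)^λ) ρ̄₀(x) ∂_t η̄(x,t) + (1/γ) ∂_x [ ρ̄₀(x)^γ / η̄_x(t)^γ ] = 0 for all x with σ(x) = A − Bx² > 0, where ρ̄₀(x) = σ(x)^{1/(γ−1)} and B = μ(1+λ)(γ−1)/(2(γ+1)). -/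
open Real

/-- The modified Barenblatt Lagrangian map satisfies the exact relation
(μ/(1+t)^λ) ρ̄₀ ∂_t η̄ + (1/γ) ∂_x (ρ̄₀^γ / η̄_x^γ) = 0 on {σ > 0}. -/
theorem stmt_2 (γ lam μ A B : ℝ) (hγ : 1 < γ) (hlam : 0 < lam) (hμ : 0 < μ) (hA : 0 < A)
    (hB : B = μ * (1 + lam) * (γ - 1) / (2 * (γ + 1)))
    (σ ρ₀ : ℝ → ℝ) (η : ℝ → ℝ → ℝ) (ηx : ℝ → ℝ)
    (hσ : ∀ x, σ x = A - B * x ^ 2)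
    (hρ₀ : ∀ x, ρ₀ x = σ x ^ (1 / (γ - 1)))
    (hηx : ∀ t, ηx t = (1 + t) ^ ((lam + 1) / (γ + 1)))
    (hη : ∀ x t : ℝ, η x t = x * ηx t) :
    ∀ x t : ℝ, 0 ≤ t → 0 < σ x →
      (μ / (1 + t) ^ lam) * ρ₀ x * deriv (fun s => η x s) t +
        (1 / γ) * deriv (fun y => ρ₀ y ^ γ / ηx t ^ γ) x = 0 := by
  intro x t ht hσx
  have hγ1 : γ - 1 ≠ 0 := by linarith
  have hγ1' : γ + 1 ≠ 0 := by linarith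
  have hγ0 : γ ≠ 0 := by linarith
  have hu : (0:ℝ) < 1 + t := by linarith
  set α := (lam + 1) / (γ + 1) with hα
  -- time derivative
  have hfun1 : (fun s => η x s) = fun s : ℝ => x * (1 + s) ^ α := by
    funext s; rw [hη, hηx]
  have h0 : HasDerivAt (fun s : ℝ => 1 + s) 1 t := by
    simpa using (hasDerivAt_id t).const_add (1:ℝ)
  have hd1 : HasDerivAt (fun s : ℝ => x * (1 + s) ^ α)
      (x * (1 * α * (1 + t) ^ (α - 1))) t :=
    (h0.rpow_const (Or.inl (ne_of_gt hu))).const_mul x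
  -- spatial derivative
  have hcσ : Continuous σ := by
    have : σ = fun y => A - B * y ^ 2 := funext hσ
    rw [this]; continuity
  have hev : ∀ᶠ y in nhds x, 0 < σ y :=
    hcσ.continuousAt.preimage_mem_nhds (Ioi_mem_nhds hσx)
  have heq : (fun y => ρ₀ y ^ γ / ηx t ^ γ)
      =ᶠ[nhds x] (fun y => σ y ^ (1 / (γ - 1) * γ) / ηx t ^ γ) := by
    filter_upwards [hev] with y hy
    rw [hρ₀, ← Real.rpow_mul hy.le]
  have hσd : HasDerivAt σ (-(2 * B * x)) x := by
    have hfun : σ = fun y => A - B * y ^ 2 := funext hσ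
    rw [hfun]
    have := ((hasDerivAt_pow 2 x).const_mul B).const_sub A
    refine this.congr_deriv ?_
    push_cast
    ring
  have hd2 : HasDerivAt (fun y => σ y ^ (1 / (γ - 1) * γ) / ηx t ^ γ)
      ((-(2 * B * x)) * (1 / (γ - 1) * γ) * σ x ^ (1 / (γ - 1) * γ - 1) / ηx t ^ γ) x :=
    (hσd.rpow_const (Or.inl hσx.ne')).div_const _
  rw [hfun1, hd1.deriv, heq.deriv_eq, hd2.deriv]
  have hq1 : 1 / (γ - 1) * γ - 1 = 1 / (γ - 1) := by field_simp; ring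
  have hC : ηx t ^ γ = (1 + t) ^ (α * γ) := by
    rw [hηx, Real.rpow_mul hu.le]
  have hsplit : (1 + t) ^ lam = (1 + t) ^ (α - 1) * (1 + t) ^ (α * γ) := by
    rw [← Real.rpow_add hu]
    congr 1
    rw [hα]; field_simp; ring
  rw [hq1, hC, hρ₀, hsplit]
  have hP : (0:ℝ) < (1 + t) ^ (α - 1) := Real.rpow_pos_of_pos hu _
  have hQ : (0:ℝ) < (1 + t) ^ (α * γ) := Real.rpow_pos_of_pos hu _
  set S := σ x ^ (1 / (γ - 1))
  set P := (1 + t) ^ (α - 1)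
  set Q := (1 + t) ^ (α * γ)
  rw [hB, hα]
  field_simp
  ring
end

section
/- Monotonicity and growth of the corrected stretch factor: with η̃_x(t) = η̄_x(t) + h(t) as above (0 ≤ h(t) ≤ C), one has η̃_x t'(t) ≥ 0 whenever expressed via the integral formula, and there exists K ≥ 1 such that (1+t)^{(λ+1)/(γ+1)} ≤ η̃_x(t) ≤ K(1+t)^{(λ+1)/(γ+1)} for all t ≥ 0. -/
open Real

/-- Monotonicity and growth of the corrected stretch factor η̃_x = η̄_x + h. -/
theorem stmt_6 (γ lam μ C : ℝ) (hγ : 1 < γ) (hlam0 : 0 < lam) (hlam1 : lam ≤ 1) (hμ : 0 < μ)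
    (ηx : ℝ → ℝ) (hηx : ∀ t, ηx t = (1 + t) ^ ((lam + 1) / (γ + 1)))
    (h : ℝ → ℝ) (hsmooth : ContDiff ℝ 2 h)
    (hbd : ∀ t : ℝ, 0 ≤ t → 0 ≤ h t ∧ h t ≤ C)
    (hode : ∀ t : ℝ, 0 ≤ t →
      deriv (deriv h) t + (μ / (1 + t) ^ lam) * deriv h t
        - (μ * (lam + 1) / (γ + 1)) * (ηx t + h t) ^ (-γ)
        + deriv (deriv ηx) t + (μ / (1 + t) ^ lam) * deriv ηx t = 0)
    (h0 : h 0 = 0) (h0' : deriv h 0 = 0) :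
    (∀ t : ℝ, 0 ≤ t → 0 ≤ deriv (fun s => ηx s + h s) t) ∧
    ∃ K : ℝ, 1 ≤ K ∧ ∀ t : ℝ, 0 ≤ t →
      (1 + t) ^ ((lam + 1) / (γ + 1)) ≤ ηx t + h t ∧
      ηx t + h t ≤ K * (1 + t) ^ ((lam + 1) / (γ + 1)) := by
  have hηxe : ηx = fun s : ℝ => (1 + s) ^ ((lam + 1) / (γ + 1)) := funext hηx
  set α : ℝ := (lam + 1) / (γ + 1) with hαdef
  have hγ1 : (0:ℝ) < γ + 1 := by linarith
  have hα0 : 0 < α := div_pos (by linarith) hγ1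
  -- base point facts
  have hbase : ∀ t : ℝ, 0 ≤ t → (1:ℝ) ≤ (1 + t) ^ α := fun t ht =>
    Real.one_le_rpow (by linarith) hα0.le
  have hsum_pos : ∀ t : ℝ, 0 ≤ t → 0 < ηx t + h t := by
    intro t ht
    have := (hbd t ht).1
    have := hbase t ht
    rw [hηx t]; linarith
  -- regularity of h
  have hsm' : ContDiff ℝ ((1:ℕ∞) + 1) h := by exact_mod_cast hsmooth
  have hpair := contDiff_succ_iff_deriv.mp hsm'
  have hdh : Differentiable ℝ h := hpair.1
  have hdh2 : Differentiable ℝ (deriv h) := hpair.2.2.differentiable (by simp)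
  -- first derivative of ηx
  have hηd : ∀ t : ℝ, -1 < t → HasDerivAt ηx (α * (1 + t) ^ (α - 1)) t := by
    intro t ht
    rw [hηxe]
    have h1 : HasDerivAt (fun s : ℝ => 1 + s) 1 t := (hasDerivAt_id t).const_add 1
    have h2 := (Real.hasDerivAt_rpow_const (x := 1 + t) (p := α)
      (Or.inl (by linarith))).comp t h1
    simpa [Function.comp_def] using h2
  -- second derivative of ηx
  have hηd2 : ∀ t : ℝ, -1 < t →
      HasDerivAt (deriv ηx) (α * ((α - 1) * (1 + t) ^ (α - 1 - 1))) t := by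
    intro t ht
    have hev : deriv ηx =ᶠ[nhds t] fun s : ℝ => α * (1 + s) ^ (α - 1) := by
      filter_upwards [isOpen_Ioi.mem_nhds (show t ∈ Set.Ioi (-1:ℝ) from ht)] with s hs
      exact (hηd s hs).deriv
    have h1 : HasDerivAt (fun s : ℝ => 1 + s) 1 t := (hasDerivAt_id t).const_add 1
    have h2 := ((Real.hasDerivAt_rpow_const (x := 1 + t) (p := α - 1)
      (Or.inl (by linarith))).comp t h1).const_mul α
    have h3 : HasDerivAt (fun s : ℝ => α * (1 + s) ^ (α - 1))
        (α * ((α - 1) * (1 + t) ^ (α - 1 - 1))) t := by simpa using h2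
    exact h3.congr_of_eventuallyEq hev
  -- integrating factor
  set p : ℝ → ℝ := fun s => μ / (1 + s) ^ lam with hpdef
  have hpcont : ContinuousOn p (Set.Ioi (-1:ℝ)) := by
    apply ContinuousOn.div continuousOn_const
    · exact ((continuous_const.add continuous_id).continuousOn).rpow_const
        (fun s hs => Or.inl (ne_of_gt (by simp only [Set.mem_Ioi] at hs; have hid : id s = s := rfl; show (0:ℝ) < 1 + id s; linarith)))
    · intro s hs
      simp only [Set.mem_Ioi] at hs
      exact ne_of_gt (Real.rpow_pos_of_pos (by linarith) lam)
  set F : ℝ → ℝ := fun t => ∫ s in (0:ℝ)..t, p s with hFdef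
  have hFd : ∀ t : ℝ, -1 < t → HasDerivAt F (p t) t := by
    intro t ht
    have hsub : Set.uIcc (0:ℝ) t ⊆ Set.Ioi (-1:ℝ) := by
      intro s hs
      have h1 := hs.1
      have : min 0 t ≤ s := h1
      have hm : (-1:ℝ) < min 0 t := lt_min (by norm_num) ht
      exact lt_of_lt_of_le hm this
    exact intervalIntegral.integral_hasDerivAt_right
      ((hpcont.mono hsub).intervalIntegrable)
      (hpcont.stronglyMeasurableAtFilter isOpen_Ioi t ht)
      (hpcont.continuousAt (isOpen_Ioi.mem_nhds ht))
  -- v and w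
  set v : ℝ → ℝ := fun t => deriv ηx t + deriv h t with hvdef
  set w : ℝ → ℝ := fun t => Real.exp (F t) * v t with hwdef
  have hvd : ∀ t : ℝ, -1 < t →
      HasDerivAt v (deriv (deriv ηx) t + deriv (deriv h) t) t := by
    intro t ht
    have h1 := hηd2 t ht
    have h2 : HasDerivAt (deriv h) (deriv (deriv h) t) t := (hdh2 t).hasDerivAt
    have h3 := h1.add h2
    rw [h1.deriv]
    exact h3
  have hwd : ∀ t : ℝ, -1 < t →
      HasDerivAt w (Real.exp (F t) * p t * v t
        + Real.exp (F t) * (deriv (deriv ηx) t + deriv (deriv h) t)) t := by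
    intro t ht
    exact ((hFd t ht).exp).mul (hvd t ht)
  -- the derivative of w is positive on [0, ∞)
  have hwpos : ∀ t : ℝ, 0 ≤ t →
      0 < Real.exp (F t) * p t * v t
        + Real.exp (F t) * (deriv (deriv ηx) t + deriv (deriv h) t) := by
    intro t ht
    have hode' := hode t ht
    have hkey : p t * v t + (deriv (deriv ηx) t + deriv (deriv h) t)
        = (μ * (lam + 1) / (γ + 1)) * (ηx t + h t) ^ (-γ) := by
      simp only [hvdef, hpdef]; ring_nf; ring_nf at hode'; linarith
    have hrpos : 0 < (ηx t + h t) ^ (-γ) := Real.rpow_pos_of_pos (hsum_pos t ht) _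
    have hcpos : 0 < μ * (lam + 1) / (γ + 1) := by positivity
    have : Real.exp (F t) * p t * v t
        + Real.exp (F t) * (deriv (deriv ηx) t + deriv (deriv h) t)
        = Real.exp (F t) * ((μ * (lam + 1) / (γ + 1)) * (ηx t + h t) ^ (-γ)) := by
      rw [← hkey]; ring
    rw [this]
    positivity
  -- w is strictly monotone on [0, ∞)
  have hwmono : StrictMonoOn w (Set.Ici (0:ℝ)) := by
    apply strictMonoOn_of_deriv_pos (convex_Ici 0)
    · intro t ht
      exact (hwd t (by simp only [Set.mem_Ici] at ht; linarith)).continuousAt.continuousWithinAt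
    · intro t ht
      rw [interior_Ici] at ht
      simp only [Set.mem_Ioi] at ht
      rw [(hwd t (by linarith)).deriv]
      exact hwpos t ht.le
  -- value at 0
  have hF0 : F 0 = 0 := intervalIntegral.integral_same
  have hderiv_ηx0 : deriv ηx 0 = α := by
    have := (hηd 0 (by norm_num)).deriv
    simpa using this
  have hw0 : w 0 = α := by
    simp only [hwdef, hvdef, hF0, Real.exp_zero, one_mul, hderiv_ηx0, h0', add_zero]
  -- v is positive on [0, ∞)
  have hvpos : ∀ t : ℝ, 0 ≤ t → 0 < v t := by
    intro t ht
    rcases eq_or_lt_of_le ht with heq | hlt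
    · rw [← heq]
      simp only [hvdef, hderiv_ηx0, h0', add_zero]
      exact hα0
    · have := hwmono (Set.self_mem_Ici) (Set.mem_Ici.mpr ht) hlt
      rw [hw0] at this
      have hwt : 0 < w t := lt_trans hα0 this
      simp only [hwdef] at hwt
      by_contra hcon
      push_neg at hcon
      have : Real.exp (F t) * v t ≤ 0 :=
        mul_nonpos_of_nonneg_of_nonpos (Real.exp_pos _).le hcon
      linarith
  constructor
  · intro t ht
    have hd1 : DifferentiableAt ℝ ηx t := (hηd t (by linarith)).differentiableAt
    rw [deriv_fun_add hd1 (hdh t)]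
    exact (hvpos t ht).le
  · refine ⟨max C 0 + 1, by simp, fun t ht => ?_⟩
    have hb := hbase t ht
    have h1 := (hbd t ht).1
    have h2 := (hbd t ht).2
    have hC : h t ≤ max C 0 := le_trans h2 (le_max_left C 0)
    constructor
    · rw [hηx t]; linarith
    · rw [hηx t]
      have : max C 0 ≤ max C 0 * (1 + t) ^ α := le_mul_of_one_le_right (le_max_right C 0) hb
      nlinarith
end

section
/- First derivative decay for λ < 1: under the growth bound (1+t)^{(λ+1)/(γ+1)} ≤ η̃_x(t) ≤ K(1+t)^{(λ+1)/(γ+1)}, the Duhamel formula implies there exists C > 0 with 0 ≤ η̃_x'(t) ≤ C(1+t)^{(λ+1)/(γ+1) − 1} for all t ≥ 0. -/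
open Real

set_option maxHeartbeats 1000000 in
/-- First derivative decay of the corrected stretch factor for λ < 1. -/
theorem stmt_8 (γ lam μ K : ℝ) (hγ : 1 < γ) (hlam0 : 0 < lam) (hlam1 : lam < 1)
    (hμ : 0 < μ) (hK : 1 ≤ K)
    (f : ℝ → ℝ) (hfpos : ∀ t : ℝ, 0 ≤ t → 0 < f t) (hsmooth : ContDiff ℝ 2 f)
    (hode : ∀ t : ℝ, 0 ≤ t →
      deriv (deriv f) t + μ * (1 + t) ^ (-lam) * deriv f t
        = (μ * (lam + 1) / (γ + 1)) * (f t) ^ (-γ))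
    (h0 : f 0 = 1) (h0' : deriv f 0 = (lam + 1) / (γ + 1))
    (hgrow : ∀ t : ℝ, 0 ≤ t →
      (1 + t) ^ ((lam + 1) / (γ + 1)) ≤ f t ∧
      f t ≤ K * (1 + t) ^ ((lam + 1) / (γ + 1))) :
    ∃ C : ℝ, 0 < C ∧ ∀ t : ℝ, 0 ≤ t →
      0 ≤ deriv f t ∧ deriv f t ≤ C * (1 + t) ^ ((lam + 1) / (γ + 1) - 1) := by
  set α : ℝ := (lam + 1) / (γ + 1) with hα
  have hγ1 : (0:ℝ) < γ + 1 := by linarith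
  have hα0 : 0 < α := div_pos (by linarith) hγ1
  have hα1 : α < 1 := by rw [hα, div_lt_one hγ1]; linarith
  set c : ℝ := μ * (lam + 1) / (γ + 1) with hc
  have hc0 : 0 < c := div_pos (by nlinarith) hγ1
  have h1mlam : (0:ℝ) < 1 - lam := by linarith
  -- differentiability facts
  have h2 : ContDiff ℝ ((1:ℕ) + 1) f := by exact_mod_cast hsmooth
  have hgd : Differentiable ℝ (deriv f) :=
    ((contDiff_succ_iff_deriv.mp h2).2.2).differentiable (by norm_num)
  -- ODE rearranged
  have hode' : ∀ t : ℝ, 0 ≤ t →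
      deriv (deriv f) t = c * f t ^ (-γ) - μ * (1 + t) ^ (-lam) * deriv f t := by
    intro t ht
    have h := hode t ht
    rw [hc]
    linarith
  -- the integrating factor
  set I : ℝ → ℝ := fun s => Real.exp (μ / (1 - lam) * (1 + s) ^ (1 - lam)) with hIdef
  have hIpos : ∀ s : ℝ, 0 < I s := fun s => Real.exp_pos _
  have hJI : ∀ t : ℝ, 0 < 1 + t →
      HasDerivAt I (μ * (1 + t) ^ (-lam) * I t) t := by
    intro t ht
    have h1 : HasDerivAt (fun s : ℝ => 1 + s) 1 t := (hasDerivAt_id t).const_add 1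
    have h2' := (h1.rpow_const (p := 1 - lam) (Or.inl (ne_of_gt ht))).const_mul (μ / (1 - lam))
    have h3 := h2'.exp
    convert h3 using 1
    have he : (1:ℝ) - lam - 1 = -lam := by ring
    rw [he]
    have he2 : μ / (1 - lam) * (1 * (1 - lam) * (1 + t) ^ (-lam)) = μ * (1 + t) ^ (-lam) := by
      field_simp
    rw [he2]
    ring
  -- derivative of u = I * deriv f
  set u : ℝ → ℝ := fun s => I s * deriv f s with hudef
  have huderiv : ∀ t : ℝ, 0 ≤ t → HasDerivAt u (I t * (c * f t ^ (-γ))) t := by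
    intro t ht
    have h1t : (0:ℝ) < 1 + t := by linarith
    have h := (hJI t h1t).mul (hgd t).hasDerivAt
    refine h.congr_deriv ?_
    rw [hode' t ht]
    ring
  -- monotonicity of u on [0, ∞)
  have humono : MonotoneOn u (Set.Ici (0:ℝ)) := by
    apply monotoneOn_of_deriv_nonneg (convex_Ici 0)
    · intro x hx
      exact ((huderiv x hx).continuousAt).continuousWithinAt
    · rw [interior_Ici]
      intro x hx
      exact ((huderiv x (le_of_lt hx)).differentiableAt).differentiableWithinAt
    · rw [interior_Ici]
      intro x hx
      rw [(huderiv x (le_of_lt hx)).deriv]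
      have := hfpos x (le_of_lt hx)
      have := Real.rpow_pos_of_pos this (-γ)
      positivity
  -- nonnegativity of deriv f
  have hgnonneg : ∀ t : ℝ, 0 ≤ t → 0 ≤ deriv f t := by
    intro t ht
    have h1 : u 0 ≤ u t := humono (Set.self_mem_Ici) ht ht
    have hu0 : 0 < u 0 := by
      rw [hudef]
      simp only
      rw [h0']
      exact mul_pos (hIpos 0) (div_pos (by linarith) hγ1)
    have hut : 0 < I t * deriv f t := lt_of_lt_of_le hu0 h1
    have hIt := hIpos t
    nlinarith [hut, hIt]
  -- choice of T
  set R : ℝ := max 1 (2 * (1 - α) / μ) with hR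
  have hR1 : (1:ℝ) ≤ R := le_max_left _ _
  have hR0 : (0:ℝ) < R := lt_of_lt_of_le one_pos hR1
  have hRge : 2 * (1 - α) / μ ≤ R := le_max_right _ _
  set T : ℝ := R ^ ((1:ℝ) / (1 - lam)) - 1 with hT
  have h1T : 1 + T = R ^ ((1:ℝ) / (1 - lam)) := by rw [hT]; ring
  have hT0 : 0 ≤ T := by
    have h1 : (1:ℝ) ≤ R ^ ((1:ℝ) / (1 - lam)) :=
      Real.one_le_rpow hR1 (by positivity)
    linarith [h1T ▸ h1]
  have h1T0 : (0:ℝ) < 1 + T := by linarith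
  have hTpow : (1 + T) ^ (1 - lam) = R := by
    rw [h1T, ← Real.rpow_mul hR0.le]
    rw [one_div, inv_mul_cancel₀ (ne_of_gt h1mlam), Real.rpow_one]
  -- bound on [0, T]
  obtain ⟨M, hM⟩ := (isCompact_Icc (a := (0:ℝ)) (b := T)).exists_bound_of_continuousOn
    (hgd.continuous.continuousOn)
  have hM0 : 0 ≤ M := le_trans (norm_nonneg _) (hM 0 ⟨le_refl 0, hT0⟩)
  set B : ℝ := max (2 * c / μ) ((M + 1) * (1 + T) ^ (1 - α)) with hB
  have hBc : 2 * c / μ ≤ B := le_max_left _ _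
  have hBM : (M + 1) * (1 + T) ^ (1 - α) ≤ B := le_max_right _ _
  have hB0 : 0 < B := lt_of_lt_of_le (by positivity) hBc
  -- bound on [0, T]
  have hle : ∀ t : ℝ, 0 ≤ t → t ≤ T → deriv f t ≤ B * (1 + t) ^ (α - 1) := by
    intro t ht htT
    have h1t : (0:ℝ) < 1 + t := by linarith
    have h1 : deriv f t ≤ M := by
      have := hM t ⟨ht, htT⟩
      rw [Real.norm_eq_abs] at this
      exact le_trans (le_abs_self _) this
    have e1 : (1 + T : ℝ) ^ (1 - α) * (1 + T) ^ (α - 1) = 1 := by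
      rw [← Real.rpow_add h1T0]
      norm_num
    have h2' : M + 1 ≤ B * (1 + T) ^ (α - 1) := by
      calc M + 1 = (M + 1) * ((1 + T) ^ (1 - α) * (1 + T) ^ (α - 1)) := by rw [e1]; ring
        _ = ((M + 1) * (1 + T) ^ (1 - α)) * (1 + T) ^ (α - 1) := by ring
        _ ≤ B * (1 + T) ^ (α - 1) :=
            mul_le_mul_of_nonneg_right hBM (Real.rpow_nonneg h1T0.le _)
    have h3 : B * (1 + T) ^ (α - 1) ≤ B * (1 + t) ^ (α - 1) :=
      mul_le_mul_of_nonneg_left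
        (Real.rpow_le_rpow_of_nonpos h1t (by linarith) (by linarith)) hB0.le
    linarith
  -- the comparison function on [T, ∞)
  set w : ℝ → ℝ := fun s => I s * (B * (1 + s) ^ (α - 1) - deriv f s) with hwdef
  have hwderiv : ∀ s : ℝ, T ≤ s →
      HasDerivAt w (I s * (B * (α - 1) * (1 + s) ^ (α - 2)
        + μ * B * (1 + s) ^ (α - 1 - lam) - c * f s ^ (-γ))) s := by
    intro s hs
    have hs0 : 0 ≤ s := le_trans hT0 hs
    have h1s : (0:ℝ) < 1 + s := by linarith
    have h1 : HasDerivAt (fun r : ℝ => 1 + r) 1 s := (hasDerivAt_id s).const_add 1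
    have hφ := (h1.rpow_const (p := α - 1) (Or.inl (ne_of_gt h1s))).const_mul B
    have h := (hJI s h1s).mul (hφ.sub (hgd s).hasDerivAt)
    refine h.congr_deriv ?_
    rw [hode' s hs0]
    have hsplit : (1 + s : ℝ) ^ (-lam) * (1 + s) ^ (α - 1) = (1 + s) ^ (α - 1 - lam) := by
      rw [← Real.rpow_add h1s]
      ring_nf
    have he2 : (α - 1 - 1 : ℝ) = α - 2 := by ring
    rw [← hsplit, he2]
    simp only [Pi.sub_apply]
    ring
  have hwmono : MonotoneOn w (Set.Ici T) := by
    apply monotoneOn_of_deriv_nonneg (convex_Ici T)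
    · intro x hx
      exact ((hwderiv x hx).continuousAt).continuousWithinAt
    · rw [interior_Ici]
      intro x hx
      exact ((hwderiv x (le_of_lt hx)).differentiableAt).differentiableWithinAt
    · rw [interior_Ici]
      intro s hs
      have hsT : T ≤ s := le_of_lt hs
      have hs0 : 0 ≤ s := le_trans hT0 hsT
      have h1s : (0:ℝ) < 1 + s := by linarith
      rw [(hwderiv s hsT).deriv]
      apply mul_nonneg (hIpos s).le
      -- key estimates
      have hexp : α * (-γ) = α - 1 - lam := by
        rw [hα]; field_simp; ring
      have hkey : f s ^ (-γ) ≤ (1 + s) ^ (α - 1 - lam) := by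
        have h1 : (1 + s) ^ α ≤ f s := (hgrow s hs0).1
        have h2' : f s ^ (-γ) ≤ ((1 + s) ^ α) ^ (-γ) :=
          Real.rpow_le_rpow_of_nonpos (Real.rpow_pos_of_pos h1s α) h1 (by linarith)
        rwa [← Real.rpow_mul h1s.le, hexp] at h2'
      have hsplit2 : (1 + s : ℝ) ^ (α - 2) = (1 + s) ^ (α - 1 - lam) * (1 + s) ^ (lam - 1) := by
        rw [← Real.rpow_add h1s]
        ring_nf
      have hQR : (1 + s : ℝ) ^ (lam - 1) ≤ R⁻¹ := by
        have h1 : R ≤ (1 + s) ^ (1 - lam) := by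
          rw [← hTpow]
          exact Real.rpow_le_rpow h1T0.le (by linarith) h1mlam.le
        have h2' : (1 + s : ℝ) ^ (lam - 1) = ((1 + s) ^ (1 - lam))⁻¹ := by
          rw [← Real.rpow_neg h1s.le]
          ring_nf
        rw [h2']
        exact inv_anti₀ hR0 h1
      have hfrac : (1 - α) * (1 + s) ^ (lam - 1) ≤ μ / 2 := by
        have hmuR : 2 * (1 - α) ≤ R * μ := (div_le_iff₀ hμ).mp hRge
        have h1 : (1 - α) * (1 + s) ^ (lam - 1) ≤ (1 - α) * R⁻¹ :=
          mul_le_mul_of_nonneg_left hQR (by linarith)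
        have h2' : (1 - α) * R⁻¹ ≤ μ / 2 := by
          rw [← div_eq_mul_inv, div_le_iff₀ hR0]
          nlinarith
        linarith
      have hμB : 2 * c ≤ B * μ := (div_le_iff₀ hμ).mp hBc
      have hP : (0:ℝ) < (1 + s) ^ (α - 1 - lam) := Real.rpow_pos_of_pos h1s _
      have hQ : (0:ℝ) ≤ (1 + s) ^ (lam - 1) := Real.rpow_nonneg h1s.le _
      rw [hsplit2]
      have hbr : μ * B - c - B * ((1 - α) * (1 + s) ^ (lam - 1)) ≥ 0 := by
        have := mul_le_mul_of_nonneg_left hfrac hB0.le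
        nlinarith
      have hc_key : c * f s ^ (-γ) ≤ c * (1 + s) ^ (α - 1 - lam) :=
        mul_le_mul_of_nonneg_left hkey hc0.le
      nlinarith [mul_nonneg hP.le hbr, hc_key]
  -- conclude
  refine ⟨B, hB0, fun t ht => ⟨hgnonneg t ht, ?_⟩⟩
  rcases le_or_gt t T with htT | hTt
  · exact hle t ht htT
  · have hwT : 0 ≤ w T := by
      have := hle T hT0 le_rfl
      exact mul_nonneg (hIpos T).le (by linarith)
    have hwt : w T ≤ w t := hwmono (Set.self_mem_Ici) (le_of_lt hTt) (le_of_lt hTt)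
    have h1 : 0 ≤ I t * (B * (1 + t) ^ (α - 1) - deriv f t) := le_trans hwT hwt
    have hIt := hIpos t
    nlinarith [h1, hIt]
end

section
/- First derivative decay in the critical case λ = 1: if η̃_x satisfies the Duhamel formula η̃_x'(t) = (2/(γ+1))(1+t)^{−μ} + (2μ/(γ+1))(1+t)^{−μ} ∫₀^t (1+s)^μ η̃_x(s)^{−γ} ds and the bound η̃_x(t) ≥ (1+t)^{2/(γ+1)}, then 0 ≤ η̃_x'(t) ≤ C(1+t)^{2/(γ+1) − 1} for some constant C and all t ≥ 0. -/
open Real intervalIntegral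

/-- First derivative decay in the critical case λ = 1. -/
theorem stmt_10 (γ μ : ℝ) (hγ : 1 < γ) (hμ : 2 < μ)
    (f : ℝ → ℝ) (hfpos : ∀ t : ℝ, 0 ≤ t → 0 < f t)
    (hduh : ∀ t : ℝ, 0 ≤ t →
      deriv f t =
        (2 / (γ + 1)) * (1 + t) ^ (-μ) +
          (2 * μ / (γ + 1)) * (1 + t) ^ (-μ) *
            ∫ s in (0:ℝ)..t, (1 + s) ^ μ * (f s) ^ (-γ))
    (hgrow : ∀ t : ℝ, 0 ≤ t → (1 + t) ^ (2 / (γ + 1)) ≤ f t) :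
    ∃ C : ℝ, 0 < C ∧ ∀ t : ℝ, 0 ≤ t →
      0 ≤ deriv f t ∧ deriv f t ≤ C * (1 + t) ^ (2 / (γ + 1) - 1) := by
  have hγ0 : (0:ℝ) < γ + 1 := by linarith
  set β : ℝ := 2 / (γ + 1) with hβ
  have hβpos : 0 < β := by positivity
  have hβγ : β * γ < 2 := by
    rw [hβ, div_mul_eq_mul_div, div_lt_iff₀ hγ0]; nlinarith
  have hexp : 1 - β * γ = β - 1 := by
    rw [hβ]; field_simp; ring
  have hμ0 : (0:ℝ) < μ := by linarith
  refine ⟨2 / (γ + 1) + 2 * μ / (γ + 1), by positivity, fun t ht => ?_⟩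
  have h1t : (0:ℝ) < 1 + t := by linarith
  have h1t1 : (1:ℝ) ≤ 1 + t := by linarith
  have hI_nonneg : 0 ≤ ∫ s in (0:ℝ)..t, (1 + s) ^ μ * (f s) ^ (-γ) := by
    refine intervalIntegral.integral_nonneg ht (fun u hu => ?_)
    have hu0 : (0:ℝ) ≤ u := hu.1
    have := hfpos u hu0
    have h1u : (0:ℝ) < 1 + u := by linarith
    positivity
  have hpowpos : (0:ℝ) < (1 + t) ^ (-μ) := rpow_pos_of_pos h1t _
  constructor
  · rw [hduh t ht]
    have hA : 0 < (2 / (γ + 1)) * (1 + t) ^ (-μ) := by positivity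
    have hB : 0 ≤ (2 * μ / (γ + 1)) * (1 + t) ^ (-μ) *
        ∫ s in (0:ℝ)..t, (1 + s) ^ μ * (f s) ^ (-γ) := by
      apply mul_nonneg _ hI_nonneg
      positivity
    linarith
  · rw [hduh t ht]
    -- pointwise bound on the integrand
    have hpt : ∀ s ∈ Set.Icc (0:ℝ) t,
        (1 + s) ^ μ * (f s) ^ (-γ) ≤ (1 + t) ^ (μ - β * γ) := by
      intro s hs
      have hs0 : (0:ℝ) ≤ s := hs.1
      have h1s : (0:ℝ) < 1 + s := by linarith
      have hfs := hfpos s hs0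
      have hg := hgrow s hs0
      have h1 : (f s) ^ (-γ) ≤ ((1 + s) ^ β) ^ (-γ) :=
        Real.rpow_le_rpow_of_nonpos (rpow_pos_of_pos h1s _) hg (by linarith)
      have h2 : ((1 + s) ^ β) ^ (-γ) = (1 + s) ^ (-(β * γ)) := by
        rw [← Real.rpow_mul h1s.le]; ring_nf
      have h3 : (1 + s) ^ μ * (f s) ^ (-γ) ≤ (1 + s) ^ μ * (1 + s) ^ (-(β * γ)) := by
        rw [← h2]
        exact mul_le_mul_of_nonneg_left h1 (rpow_nonneg h1s.le _)
      have h4 : (1 + s) ^ μ * (1 + s) ^ (-(β * γ)) = (1 + s) ^ (μ - β * γ) := by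
        rw [← Real.rpow_add h1s]; ring_nf
      have h5 : (1 + s) ^ (μ - β * γ) ≤ (1 + t) ^ (μ - β * γ) := by
        apply Real.rpow_le_rpow h1s.le (by linarith [hs.2]) (by linarith)
      linarith [h3, h4 ▸ h3]
    -- bound the integral
    have hIbound : (∫ s in (0:ℝ)..t, (1 + s) ^ μ * (f s) ^ (-γ)) ≤
        (1 + t) * (1 + t) ^ (μ - β * γ) := by
      have hconst_nonneg : (0:ℝ) ≤ (1 + t) ^ (μ - β * γ) := rpow_nonneg h1t.le _
      by_cases hInt : IntervalIntegrable (fun s => (1 + s) ^ μ * (f s) ^ (-γ))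
          MeasureTheory.volume 0 t
      · have hmono := intervalIntegral.integral_mono_on ht hInt
          (_root_.intervalIntegrable_const (c := (1 + t) ^ (μ - β * γ))) hpt
        have hconst : (∫ _ in (0:ℝ)..t, (1 + t) ^ (μ - β * γ)) =
            t * (1 + t) ^ (μ - β * γ) := by
          simp [intervalIntegral.integral_const]
        rw [hconst] at hmono
        nlinarith
      · rw [intervalIntegral.integral_undef hInt]
        positivity
    -- assemble
    have key1 : (2 / (γ + 1)) * (1 + t) ^ (-μ) ≤ (2 / (γ + 1)) * (1 + t) ^ (β - 1) := by
      apply mul_le_mul_of_nonneg_left _ (by positivity)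
      exact Real.rpow_le_rpow_of_exponent_le h1t1 (by linarith)
    have key2 : (2 * μ / (γ + 1)) * (1 + t) ^ (-μ) *
        (∫ s in (0:ℝ)..t, (1 + s) ^ μ * (f s) ^ (-γ)) ≤
        (2 * μ / (γ + 1)) * (1 + t) ^ (β - 1) := by
      have hc : (0:ℝ) ≤ (2 * μ / (γ + 1)) * (1 + t) ^ (-μ) := by positivity
      calc (2 * μ / (γ + 1)) * (1 + t) ^ (-μ) *
            (∫ s in (0:ℝ)..t, (1 + s) ^ μ * (f s) ^ (-γ))
          ≤ (2 * μ / (γ + 1)) * (1 + t) ^ (-μ) * ((1 + t) * (1 + t) ^ (μ - β * γ)) :=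
            mul_le_mul_of_nonneg_left hIbound hc
        _ = (2 * μ / (γ + 1)) * ((1 + t) ^ (-μ) * (1 + t) ^ (1:ℝ) * (1 + t) ^ (μ - β * γ)) := by
            rw [Real.rpow_one]; ring
        _ = (2 * μ / (γ + 1)) * (1 + t) ^ (β - 1) := by
            rw [← Real.rpow_add h1t, ← Real.rpow_add h1t]
            congr 1
            rw [← hexp]; ring_nf
    have hsum : (2 / (γ + 1)) * (1 + t) ^ (β - 1) + (2 * μ / (γ + 1)) * (1 + t) ^ (β - 1) =
        (2 / (γ + 1) + 2 * μ / (γ + 1)) * (1 + t) ^ (β - 1) := by ring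
    linarith [key1, key2]
end

section
/- Integral estimate used for the corrector derivative bounds (λ < 1): for μ > 0, 0 < λ < 1, and any exponent a > λ − 1, there is a constant C such that ∫₀^t e^{(μ/(1−λ))[(1+s)^{1−λ} − (1+t)^{1−λ}]} (1+s)^{−a} ds ≤ C (1+t)^{−a+λ} for all t ≥ 0. -/
open Real intervalIntegral

lemma stmt11_base_deriv (s : ℝ) (r : ℝ) (hs : 0 < 1 + s) :
    HasDerivAt (fun x : ℝ => (1 + x) ^ r) (r * (1 + s) ^ (r - 1)) s := by
  have h1 : HasDerivAt (fun x : ℝ => 1 + x) 1 s := by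
    simpa using (hasDerivAt_id s).const_add 1
  have h := (Real.hasDerivAt_rpow_const (x := 1 + s) (p := r) (Or.inl hs.ne')).comp s h1
  rw [mul_one] at h
  exact h

lemma stmt11_hasDeriv (ν p r s : ℝ) (hs : 0 < 1 + s) :
    HasDerivAt (fun x : ℝ => Real.exp (ν * (1 + x) ^ r) * (1 + x) ^ p)
      (Real.exp (ν * (1 + s) ^ r) * (1 + s) ^ (p + r - 1) * (ν * r)
        + Real.exp (ν * (1 + s) ^ r) * ((1 + s) ^ (p - 1) * p)) s := by
  have h2 := stmt11_base_deriv s r hs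
  have h3 := stmt11_base_deriv s p hs
  have h4 : HasDerivAt (fun x : ℝ => Real.exp (ν * (1 + x) ^ r))
      (Real.exp (ν * (1 + s) ^ r) * (ν * (r * (1 + s) ^ (r - 1)))) s :=
    (h2.const_mul ν).exp
  have h5 := h4.mul h3
  refine h5.congr_deriv ?_
  rw [show p + r - 1 = (r - 1) + p by ring, Real.rpow_add hs]
  ring

lemma stmt11_cont (k r e : ℝ) :
    ContinuousOn (fun s : ℝ => Real.exp (k * (1 + s) ^ r) * (1 + s) ^ e) (Set.Ici (0:ℝ)) := by
  have hbase : ContinuousOn (fun s : ℝ => 1 + s) (Set.Ici (0:ℝ)) :=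
    (continuous_const.add continuous_id).continuousOn
  have hne : ∀ x ∈ Set.Ici (0:ℝ), (1:ℝ) + x ≠ 0 := by
    intro x hx
    simp only [Set.mem_Ici] at hx
    positivity
  have h1 : ContinuousOn (fun s : ℝ => Real.exp (k * (1 + s) ^ r)) (Set.Ici (0:ℝ)) :=
    Real.continuous_exp.comp_continuousOn
      (continuousOn_const.mul (hbase.rpow_const (fun x hx => Or.inl (hne x hx))))
  exact h1.mul (hbase.rpow_const (fun x hx => Or.inl (hne x hx)))

/-- Integral estimate used for the corrector derivative bounds when λ < 1. -/
theorem stmt_11 (μ lam a : ℝ) (hμ : 0 < μ) (hlam0 : 0 < lam) (hlam1 : lam < 1)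
    (ha : lam - 1 < a) :
    ∃ C : ℝ, 0 < C ∧ ∀ t : ℝ, 0 ≤ t →
      (∫ s in (0:ℝ)..t,
          Real.exp ((μ / (1 - lam)) * ((1 + s) ^ (1 - lam) - (1 + t) ^ (1 - lam))) *
            (1 + s) ^ (-a)) ≤ C * (1 + t) ^ (-a + lam) := by
  have h1l : (0:ℝ) < 1 - lam := by linarith
  set ν : ℝ := μ / (1 - lam) with hν
  set q : ℝ := 1 - lam with hq
  have hν0 : 0 < ν := div_pos hμ h1l
  have hνμ : ν * q = μ := by
    rw [hν, hq]; field_simp; exact div_self (ne_of_gt h1l)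
  -- threshold s₀
  set M0 : ℝ := max 1 (2 * (a - lam) / μ) with hM0
  have hM0_1 : (1:ℝ) ≤ M0 := le_max_left _ _
  have hM0pos : (0:ℝ) < M0 := lt_of_lt_of_le one_pos hM0_1
  set s₀ : ℝ := M0 ^ (q⁻¹) with hs₀def
  have hs₀1 : (1:ℝ) ≤ s₀ := Real.one_le_rpow hM0_1 (by positivity)
  have hs₀0 : (0:ℝ) < s₀ := lt_of_lt_of_le one_pos hs₀1
  -- w bound
  have hw : ∀ s : ℝ, s₀ ≤ s → μ / 2 ≤ μ + (lam - a) * (1 + s) ^ (lam - 1) := by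
    intro s hs
    have hs1 : (1:ℝ) ≤ 1 + s := by linarith [hs₀1.trans hs]
    have hspos : (0:ℝ) < 1 + s := by linarith
    rcases le_or_gt (a - lam) 0 with h | h
    · have h0 : 0 ≤ (lam - a) * (1 + s) ^ (lam - 1) :=
        mul_nonneg (by linarith) (Real.rpow_nonneg (by linarith) _)
      linarith
    · have hb : 2 * (a - lam) / μ ≤ M0 := le_max_right _ _
      have hq1 : M0 ≤ (1 + s) ^ q := by
        calc M0 = (M0 ^ q⁻¹) ^ q := by
              rw [← Real.rpow_mul hM0pos.le, inv_mul_cancel₀ h1l.ne', Real.rpow_one]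
          _ ≤ (1 + s) ^ q := Real.rpow_le_rpow (by positivity) (by linarith) h1l.le
      have hinv : (1 + s) ^ (lam - 1) = ((1 + s) ^ q)⁻¹ := by
        rw [← Real.rpow_neg hspos.le]
        congr 1
        rw [hq]; ring
      have hqpos : (0:ℝ) < (1 + s) ^ q := Real.rpow_pos_of_pos hspos _
      have hle : a - lam ≤ μ / 2 * (1 + s) ^ q := by
        have h2 : a - lam ≤ μ / 2 * M0 := by
          rw [div_le_iff₀ hμ] at hb; nlinarith
        nlinarith
      have hkey : (a - lam) * (1 + s) ^ (lam - 1) ≤ μ / 2 := by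
        rw [hinv]
        calc (a - lam) * ((1 + s) ^ q)⁻¹
            ≤ (μ / 2 * (1 + s) ^ q) * ((1 + s) ^ q)⁻¹ :=
              mul_le_mul_of_nonneg_right hle (by positivity)
          _ = μ / 2 := by field_simp
      nlinarith [hkey]
  -- constants
  set P : ℝ := (1 + s₀) ^ |a| with hPdef
  have hPpos : 0 < P := Real.rpow_pos_of_pos (by linarith) _
  have hP1 : ∀ s : ℝ, 0 ≤ s → s ≤ s₀ → (1 + s) ^ (-a) ≤ P := by
    intro s hs0 hss
    have h1s : (1:ℝ) ≤ 1 + s := by linarith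
    calc (1 + s) ^ (-a) ≤ (1 + s) ^ |a| :=
          Real.rpow_le_rpow_of_exponent_le h1s (neg_le_abs a)
      _ ≤ (1 + s₀) ^ |a| := Real.rpow_le_rpow (by linarith) (by linarith) (abs_nonneg a)
  set Q : ℝ := (1 + s₀) ^ (-|(-a + lam)|) with hQdef
  have hQpos : 0 < Q := Real.rpow_pos_of_pos (by linarith) _
  have hQ1 : ∀ u : ℝ, 0 ≤ u → u ≤ s₀ → Q ≤ (1 + u) ^ (-a + lam) := by
    intro u hu0 hus
    have h1u : (1:ℝ) ≤ 1 + u := by linarith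
    calc Q ≤ (1 + u) ^ (-|(-a + lam)|) :=
          Real.rpow_le_rpow_of_nonpos (by linarith) (by linarith)
            (neg_nonpos_of_nonneg (abs_nonneg _))
      _ ≤ (1 + u) ^ (-a + lam) :=
          Real.rpow_le_rpow_of_exponent_le h1u (neg_abs_le _)
  obtain ⟨n, hn⟩ := exists_nat_ge ((a - lam) / q)
  set K : ℝ := n.factorial / ν ^ n with hKdef
  have hKpos : 0 < K := by positivity
  have hK : ∀ u : ℝ, 0 ≤ u →
      Real.exp (-(ν * (1 + u) ^ q)) ≤ K * (1 + u) ^ (lam - a) := by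
    intro u hu
    have h1u : (1:ℝ) ≤ 1 + u := by linarith
    have h1up : (0:ℝ) < 1 + u := by linarith
    have hX : (0:ℝ) ≤ ν * (1 + u) ^ q := by positivity
    have hf := Real.pow_div_factorial_le_exp _ hX n
    have hpow : (ν * (1 + u) ^ q) ^ n = ν ^ n * (1 + u) ^ (q * n) := by
      rw [mul_pow, ← Real.rpow_natCast ((1 + u) ^ q) n, ← Real.rpow_mul h1up.le]
    have hexp2 : (1 + u) ^ (a - lam) ≤ (1 + u) ^ (q * n) := by
      apply Real.rpow_le_rpow_of_exponent_le h1u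
      rw [div_le_iff₀ h1l] at hn
      exact hn.trans_eq (mul_comm _ _)
    have hKe : (1 + u) ^ (a - lam) ≤ K * Real.exp (ν * (1 + u) ^ q) := by
      have h2 : ν ^ n * (1 + u) ^ (q * n) / n.factorial ≤ Real.exp (ν * (1 + u) ^ q) := by
        rw [← hpow]; exact hf
      have hfacpos : (0:ℝ) < n.factorial := by positivity
      calc (1 + u) ^ (a - lam) ≤ (1 + u) ^ (q * n) := hexp2
        _ = K * (ν ^ n * (1 + u) ^ (q * n) / n.factorial) := by
            rw [hKdef]; field_simp
        _ ≤ K * Real.exp (ν * (1 + u) ^ q) :=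
            mul_le_mul_of_nonneg_left h2 hKpos.le
    have hone : (1 + u) ^ (a - lam) * (1 + u) ^ (lam - a) = 1 := by
      rw [← Real.rpow_add h1up]; norm_num
    rw [Real.exp_neg]
    calc (Real.exp (ν * (1 + u) ^ q))⁻¹
        = ((1 + u) ^ (a - lam) * (1 + u) ^ (lam - a)) * (Real.exp (ν * (1 + u) ^ q))⁻¹ := by
          rw [hone, one_mul]
      _ ≤ ((K * Real.exp (ν * (1 + u) ^ q)) * (1 + u) ^ (lam - a)) *
            (Real.exp (ν * (1 + u) ^ q))⁻¹ := by
          apply mul_le_mul_of_nonneg_right _ (by positivity)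
          exact mul_le_mul_of_nonneg_right hKe (Real.rpow_nonneg h1up.le _)
      _ = K * (1 + u) ^ (lam - a) := by field_simp
  -- continuity
  have hbase : ContinuousOn (fun s : ℝ => 1 + s) (Set.Ici (0:ℝ)) :=
    (continuous_const.add continuous_id).continuousOn
  have hcontD : ContinuousOn (fun s : ℝ =>
      Real.exp (ν * (1 + s) ^ q) * (1 + s) ^ (-a) * (μ + (lam - a) * (1 + s) ^ (lam - 1)))
      (Set.Ici (0:ℝ)) := by
    apply (stmt11_cont ν q (-a)).mul
    apply continuousOn_const.add
    apply continuousOn_const.mul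
    apply hbase.rpow_const
    intro x hx
    left
    simp only [Set.mem_Ici] at hx
    positivity
  have hInt : ∀ A B : ℝ, 0 ≤ A → 0 ≤ B → ∀ e : ℝ,
      IntervalIntegrable (fun s : ℝ => Real.exp (ν * (1 + s) ^ q) * (1 + s) ^ e)
        MeasureTheory.volume A B := by
    intro A B hA hB e
    apply ContinuousOn.intervalIntegrable
    apply (stmt11_cont ν q e).mono
    intro x hx
    exact le_trans (le_min hA hB) hx.1
  -- the constant
  have hM2nonneg : 0 ≤ Real.exp (ν * (1 + s₀) ^ q) * P * s₀ * K :=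
    mul_nonneg (mul_nonneg (mul_nonneg (Real.exp_pos _).le hPpos.le) hs₀0.le) hKpos.le
  have hSPQ : 0 ≤ s₀ * P / Q := div_nonneg (mul_nonneg hs₀0.le hPpos.le) hQpos.le
  have h2μ : 0 ≤ 2 / μ := div_nonneg (by norm_num) hμ.le
  refine ⟨s₀ * P / Q + Real.exp (ν * (1 + s₀) ^ q) * P * s₀ * K + 2 / μ + 1,
    by linarith, ?_⟩
  intro t ht
  have h1t : (0:ℝ) < 1 + t := by linarith
  have hTpos : (0:ℝ) < (1 + t) ^ (-a + lam) := Real.rpow_pos_of_pos h1t _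
  have hre : (∫ s in (0:ℝ)..t, Real.exp (ν * ((1 + s) ^ q - (1 + t) ^ q)) * (1 + s) ^ (-a))
      = Real.exp (-(ν * (1 + t) ^ q)) *
        ∫ s in (0:ℝ)..t, Real.exp (ν * (1 + s) ^ q) * (1 + s) ^ (-a) := by
    rw [← intervalIntegral.integral_const_mul]
    apply intervalIntegral.integral_congr
    intro s _
    dsimp only
    rw [mul_sub, Real.exp_sub, Real.exp_neg]
    ring
  rw [hre]
  have hEpos : (0:ℝ) < Real.exp (-(ν * (1 + t) ^ q)) := Real.exp_pos _
  have hEexp : Real.exp (-(ν * (1 + t) ^ q)) * Real.exp (ν * (1 + t) ^ q) = 1 := by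
    rw [← Real.exp_add]; simp
  rcases le_or_gt t s₀ with hts | hts
  · -- small t : direct bound
    have hmono : (∫ s in (0:ℝ)..t, Real.exp (ν * (1 + s) ^ q) * (1 + s) ^ (-a))
        ≤ ∫ _s in (0:ℝ)..t, Real.exp (ν * (1 + t) ^ q) * P := by
      apply intervalIntegral.integral_mono_on ht (hInt 0 t le_rfl ht (-a))
        intervalIntegrable_const
      intro x hx
      have hx0 : 0 ≤ x := hx.1
      have hxt : x ≤ t := hx.2
      have h1 : Real.exp (ν * (1 + x) ^ q) ≤ Real.exp (ν * (1 + t) ^ q) := by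
        apply Real.exp_le_exp.mpr
        exact mul_le_mul_of_nonneg_left
          (Real.rpow_le_rpow (by linarith) (by linarith) h1l.le) hν0.le
      have h2 : (1 + x) ^ (-a) ≤ P := hP1 x hx0 (le_trans hxt hts)
      exact mul_le_mul h1 h2 (Real.rpow_nonneg (by linarith) _) (Real.exp_pos _).le
    rw [intervalIntegral.integral_const] at hmono
    have hIQ : Q ≤ (1 + t) ^ (-a + lam) := hQ1 t ht hts
    calc Real.exp (-(ν * (1 + t) ^ q)) *
          ∫ s in (0:ℝ)..t, Real.exp (ν * (1 + s) ^ q) * (1 + s) ^ (-a)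
        ≤ Real.exp (-(ν * (1 + t) ^ q)) * ((t - 0) • (Real.exp (ν * (1 + t) ^ q) * P)) :=
          mul_le_mul_of_nonneg_left hmono hEpos.le
      _ = t * P * (Real.exp (-(ν * (1 + t) ^ q)) * Real.exp (ν * (1 + t) ^ q)) := by
          rw [smul_eq_mul]; ring
      _ = t * P := by rw [hEexp, mul_one]
      _ ≤ (s₀ * P / Q) * (1 + t) ^ (-a + lam) := by
          have h3 : t * P ≤ s₀ * P := mul_le_mul_of_nonneg_right hts hPpos.le
          have h4 : (s₀ * P / Q) * Q ≤ (s₀ * P / Q) * (1 + t) ^ (-a + lam) :=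
            mul_le_mul_of_nonneg_left hIQ hSPQ
          have h5 : (s₀ * P / Q) * Q = s₀ * P := by field_simp
          linarith
      _ ≤ (s₀ * P / Q + Real.exp (ν * (1 + s₀) ^ q) * P * s₀ * K + 2 / μ + 1) *
            (1 + t) ^ (-a + lam) := by
          apply mul_le_mul_of_nonneg_right _ hTpos.le
          linarith
  · -- large t : split at s₀
    have hint1 := hInt 0 s₀ le_rfl hs₀0.le (-a)
    have hint2 := hInt s₀ t hs₀0.le ht (-a)
    have hsplit := intervalIntegral.integral_add_adjacent_intervals hint1 hint2
    have hIntD : IntervalIntegrable (fun s : ℝ =>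
        Real.exp (ν * (1 + s) ^ q) * (1 + s) ^ (-a) * (μ + (lam - a) * (1 + s) ^ (lam - 1)))
        MeasureTheory.volume s₀ t := by
      apply ContinuousOn.intervalIntegrable
      apply hcontD.mono
      intro x hx
      exact le_trans (le_min hs₀0.le ht) hx.1
    have hpiece1 : (∫ s in (0:ℝ)..s₀, Real.exp (ν * (1 + s) ^ q) * (1 + s) ^ (-a))
        ≤ s₀ * (Real.exp (ν * (1 + s₀) ^ q) * P) := by
      have hmono : (∫ s in (0:ℝ)..s₀, Real.exp (ν * (1 + s) ^ q) * (1 + s) ^ (-a))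
          ≤ ∫ _s in (0:ℝ)..s₀, Real.exp (ν * (1 + s₀) ^ q) * P := by
        apply intervalIntegral.integral_mono_on hs₀0.le hint1 intervalIntegrable_const
        intro x hx
        have h1 : Real.exp (ν * (1 + x) ^ q) ≤ Real.exp (ν * (1 + s₀) ^ q) := by
          apply Real.exp_le_exp.mpr
          exact mul_le_mul_of_nonneg_left
            (Real.rpow_le_rpow (by linarith [hx.1]) (by linarith [hx.2]) h1l.le) hν0.le
        have h2 : (1 + x) ^ (-a) ≤ P := hP1 x hx.1 hx.2
        exact mul_le_mul h1 h2 (Real.rpow_nonneg (by linarith [hx.1]) _) (Real.exp_pos _).le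
      rw [intervalIntegral.integral_const, smul_eq_mul] at hmono
      calc (∫ s in (0:ℝ)..s₀, Real.exp (ν * (1 + s) ^ q) * (1 + s) ^ (-a))
          ≤ (s₀ - 0) * (Real.exp (ν * (1 + s₀) ^ q) * P) := hmono
        _ = s₀ * (Real.exp (ν * (1 + s₀) ^ q) * P) := by ring
    have hd : ∀ x ∈ Set.uIcc s₀ t,
        HasDerivAt (fun y : ℝ => Real.exp (ν * (1 + y) ^ q) * (1 + y) ^ (lam - a))
          (Real.exp (ν * (1 + x) ^ q) * (1 + x) ^ (-a) *
            (μ + (lam - a) * (1 + x) ^ (lam - 1))) x := by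
      intro x hx
      have hxlo : s₀ ≤ x := by
        have h := hx.1
        rwa [min_eq_left hts.le] at h
      have hx0 : (0:ℝ) < 1 + x := by linarith [hs₀1.trans hxlo]
      have h := stmt11_hasDeriv ν (lam - a) q x hx0
      convert h using 1
      rw [show lam - a + q - 1 = -a by rw [hq]; ring]
      rw [show lam - a - 1 = -a + (lam - 1) by ring, Real.rpow_add hx0]
      rw [← hνμ]
      ring
    have hFTC := intervalIntegral.integral_eq_sub_of_hasDerivAt hd hIntD
    have hpiece2 : (∫ s in s₀..t, Real.exp (ν * (1 + s) ^ q) * (1 + s) ^ (-a))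
        ≤ 2 / μ * (Real.exp (ν * (1 + t) ^ q) * (1 + t) ^ (lam - a)) := by
      have hptwise : ∀ x ∈ Set.Icc s₀ t,
          Real.exp (ν * (1 + x) ^ q) * (1 + x) ^ (-a)
          ≤ 2 / μ * (Real.exp (ν * (1 + x) ^ q) * (1 + x) ^ (-a) *
              (μ + (lam - a) * (1 + x) ^ (lam - 1))) := by
        intro x hx
        have hx0 : (0:ℝ) < 1 + x := by linarith [hs₀1.trans hx.1]
        have hwx := hw x hx.1
        have hΨpos : (0:ℝ) < Real.exp (ν * (1 + x) ^ q) * (1 + x) ^ (-a) :=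
          mul_pos (Real.exp_pos _) (Real.rpow_pos_of_pos hx0 _)
        have hone : (1:ℝ) ≤ 2 * (μ + (lam - a) * (1 + x) ^ (lam - 1)) / μ :=
          (one_le_div hμ).mpr (by linarith)
        calc Real.exp (ν * (1 + x) ^ q) * (1 + x) ^ (-a)
            = (Real.exp (ν * (1 + x) ^ q) * (1 + x) ^ (-a)) * 1 := by ring
          _ ≤ (Real.exp (ν * (1 + x) ^ q) * (1 + x) ^ (-a)) *
                (2 * (μ + (lam - a) * (1 + x) ^ (lam - 1)) / μ) :=
              mul_le_mul_of_nonneg_left hone hΨpos.le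
          _ = 2 / μ * (Real.exp (ν * (1 + x) ^ q) * (1 + x) ^ (-a) *
                (μ + (lam - a) * (1 + x) ^ (lam - 1))) := by ring
      calc (∫ s in s₀..t, Real.exp (ν * (1 + s) ^ q) * (1 + s) ^ (-a))
          ≤ ∫ s in s₀..t, 2 / μ * (Real.exp (ν * (1 + s) ^ q) * (1 + s) ^ (-a) *
              (μ + (lam - a) * (1 + s) ^ (lam - 1))) := by
            apply intervalIntegral.integral_mono_on hts.le hint2 (hIntD.const_mul (2 / μ))
            exact hptwise
        _ = 2 / μ * ((Real.exp (ν * (1 + t) ^ q) * (1 + t) ^ (lam - a))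
              - (Real.exp (ν * (1 + s₀) ^ q) * (1 + s₀) ^ (lam - a))) := by
            rw [intervalIntegral.integral_const_mul, hFTC]
        _ ≤ 2 / μ * (Real.exp (ν * (1 + t) ^ q) * (1 + t) ^ (lam - a)) := by
            have h0 : (0:ℝ) ≤ Real.exp (ν * (1 + s₀) ^ q) * (1 + s₀) ^ (lam - a) :=
              mul_nonneg (Real.exp_pos _).le (Real.rpow_nonneg (by linarith) _)
            exact mul_le_mul_of_nonneg_left (sub_le_self _ h0) h2μ
    rw [← hsplit]
    have hEK := hK t ht
    have hT : (1 + t) ^ (lam - a) = (1 + t) ^ (-a + lam) := by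
      congr 1
      ring
    have hI1 : Real.exp (-(ν * (1 + t) ^ q)) *
          (∫ s in (0:ℝ)..s₀, Real.exp (ν * (1 + s) ^ q) * (1 + s) ^ (-a))
        ≤ (Real.exp (ν * (1 + s₀) ^ q) * P * s₀ * K) * (1 + t) ^ (-a + lam) := by
      calc Real.exp (-(ν * (1 + t) ^ q)) *
            (∫ s in (0:ℝ)..s₀, Real.exp (ν * (1 + s) ^ q) * (1 + s) ^ (-a))
          ≤ Real.exp (-(ν * (1 + t) ^ q)) * (s₀ * (Real.exp (ν * (1 + s₀) ^ q) * P)) :=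
            mul_le_mul_of_nonneg_left hpiece1 hEpos.le
        _ = (s₀ * (Real.exp (ν * (1 + s₀) ^ q) * P)) * Real.exp (-(ν * (1 + t) ^ q)) := by ring
        _ ≤ (s₀ * (Real.exp (ν * (1 + s₀) ^ q) * P)) * (K * (1 + t) ^ (lam - a)) := by
            apply mul_le_mul_of_nonneg_left hEK
            exact mul_nonneg hs₀0.le (mul_nonneg (Real.exp_pos _).le hPpos.le)
        _ = (Real.exp (ν * (1 + s₀) ^ q) * P * s₀ * K) * (1 + t) ^ (-a + lam) := by
            rw [← hT]; ring
    have hI2 : Real.exp (-(ν * (1 + t) ^ q)) *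
          (∫ s in s₀..t, Real.exp (ν * (1 + s) ^ q) * (1 + s) ^ (-a))
        ≤ 2 / μ * (1 + t) ^ (-a + lam) := by
      calc Real.exp (-(ν * (1 + t) ^ q)) *
            (∫ s in s₀..t, Real.exp (ν * (1 + s) ^ q) * (1 + s) ^ (-a))
          ≤ Real.exp (-(ν * (1 + t) ^ q)) *
              (2 / μ * (Real.exp (ν * (1 + t) ^ q) * (1 + t) ^ (lam - a))) :=
            mul_le_mul_of_nonneg_left hpiece2 hEpos.le
        _ = (Real.exp (-(ν * (1 + t) ^ q)) * Real.exp (ν * (1 + t) ^ q)) *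
              (2 / μ * (1 + t) ^ (lam - a)) := by ring
        _ = 2 / μ * (1 + t) ^ (-a + lam) := by rw [hEexp, one_mul, hT]
    rw [mul_add]
    calc Real.exp (-(ν * (1 + t) ^ q)) *
            (∫ s in (0:ℝ)..s₀, Real.exp (ν * (1 + s) ^ q) * (1 + s) ^ (-a))
          + Real.exp (-(ν * (1 + t) ^ q)) *
            (∫ s in s₀..t, Real.exp (ν * (1 + s) ^ q) * (1 + s) ^ (-a))
        ≤ (Real.exp (ν * (1 + s₀) ^ q) * P * s₀ * K) * (1 + t) ^ (-a + lam)
            + 2 / μ * (1 + t) ^ (-a + lam) := add_le_add hI1 hI2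
      _ = (Real.exp (ν * (1 + s₀) ^ q) * P * s₀ * K + 2 / μ) * (1 + t) ^ (-a + lam) := by ring
      _ ≤ (s₀ * P / Q + Real.exp (ν * (1 + s₀) ^ q) * P * s₀ * K + 2 / μ + 1) *
            (1 + t) ^ (-a + lam) := by
          apply mul_le_mul_of_nonneg_right _ hTpos.le
          linarith
end

section
/- ODE energy decay for the linearized damped equation with λ = 1, μ > 2 (scalar model): let κ = (μ−2)/2 > 0 and suppose y: [0,∞) → ℝ is C² and satisfies y'' + (μ/(1+t)) y' + c(t) y = 0 where c(t) ≥ c₀(1+t)^{−2} with c₀ > 0. Then the quantity E(t) = (1+t)² (y')² /2 + (1+κ)(1+t) y y' + ((1+κ)(1+2κ)/2) y² + (1+t)² c(t) y²/2 satisfies, whenever c'(t) ≤ 0, the differential inequality E'(t) + κ(1+t)[(y')² + c(t) y²] ≤ 0. -/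
open Real

/-- ODE energy decay for the linearized damped equation with λ = 1, μ > 2
(scalar model of the basic weighted energy estimate). -/
theorem stmt_14 (μ : ℝ) (hμ : 2 < μ)
    (c : ℝ → ℝ) (c₀ : ℝ) (hc₀ : 0 < c₀) (hc : ContDiff ℝ 1 c)
    (hcpos : ∀ t : ℝ, 0 ≤ t → 0 < c t)
    (hclow : ∀ t : ℝ, 0 ≤ t → c₀ * (1 + t) ^ (-(2:ℝ)) ≤ c t)
    (hcdec : ∀ t : ℝ, 0 ≤ t → deriv c t ≤ 0)
    (y : ℝ → ℝ) (hy : ContDiff ℝ 2 y)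
    (hode : ∀ t : ℝ, 0 ≤ t →
      deriv (deriv y) t + (μ / (1 + t)) * deriv y t + c t * y t = 0) :
    ∀ t : ℝ, 0 ≤ t →
      deriv (fun s =>
          (1 + s) ^ 2 * (deriv y s) ^ 2 / 2
            + (1 + (μ - 2) / 2) * (1 + s) * y s * deriv y s
            + ((1 + (μ - 2) / 2) * (1 + 2 * ((μ - 2) / 2)) / 2) * (y s) ^ 2
            + (1 + s) ^ 2 * c s * (y s) ^ 2 / 2) t
        + ((μ - 2) / 2) * (1 + t) * ((deriv y t) ^ 2 + c t * (y t) ^ 2) ≤ 0 := by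
  intro t ht
  have h1t : (0:ℝ) < 1 + t := by linarith
  have hydiff : Differentiable ℝ y := hy.differentiable (by norm_num)
  have hy2 : ContDiff ℝ (1+1 : ℕ∞) y := by norm_num; exact hy
  have hvdiff : Differentiable ℝ (deriv y) :=
    ((contDiff_succ_iff_deriv (n := 1)).mp (by norm_num; exact hy)).2.2.differentiable one_ne_zero
  have hcdiff : Differentiable ℝ c := hc.differentiable one_ne_zero
  have hyd : HasDerivAt y (deriv y t) t := (hydiff t).hasDerivAt
  have hvd : HasDerivAt (deriv y) (deriv (deriv y) t) t := (hvdiff t).hasDerivAt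
  have hcd : HasDerivAt c (deriv c t) t := (hcdiff t).hasDerivAt
  have h1 : HasDerivAt (fun s : ℝ => 1 + s) 1 t := by
    simpa using (hasDerivAt_id t).const_add (1:ℝ)
  have hsq : HasDerivAt (fun s : ℝ => (1+s)^2) (2 * (1+t)^1 * 1) t := h1.pow 2
  have hv2 : HasDerivAt (fun s : ℝ => (deriv y s)^2)
      (2 * (deriv y t)^1 * deriv (deriv y) t) t := hvd.pow 2
  have hy2' : HasDerivAt (fun s : ℝ => (y s)^2) (2 * (y t)^1 * deriv y t) t := hyd.pow 2
  have T1 := (hsq.mul hv2).div_const 2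
  have T2 := ((h1.const_mul (1 + (μ - 2) / 2)).mul hyd).mul hvd
  have T3 := hy2'.const_mul ((1 + (μ - 2) / 2) * (1 + 2 * ((μ - 2) / 2)) / 2)
  have T4 := ((hsq.mul hcd).mul hy2').div_const 2
  have hE := ((T1.add T2).add T3).add T4
  have hE' : HasDerivAt (fun s =>
          (1 + s) ^ 2 * (deriv y s) ^ 2 / 2
            + (1 + (μ - 2) / 2) * (1 + s) * y s * deriv y s
            + ((1 + (μ - 2) / 2) * (1 + 2 * ((μ - 2) / 2)) / 2) * (y s) ^ 2
            + (1 + s) ^ 2 * c s * (y s) ^ 2 / 2) _ t := hE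
  rw [hE'.deriv]
  simp only [Pi.mul_apply]
  have hA : deriv (deriv y) t = -(μ/(1+t)) * deriv y t - c t * y t := by
    have := hode t ht; linarith
  rw [hA]
  have key : (2 * (1 + t) ^ 1 * 1 * deriv y t ^ 2 +
        (1 + t) ^ 2 * (2 * deriv y t ^ 1 * (-(μ / (1 + t)) * deriv y t - c t * y t))) / 2 +
        (((1 + (μ - 2) / 2) * 1 * y t + (1 + (μ - 2) / 2) * (1 + t) * deriv y t) * deriv y t +
          (1 + (μ - 2) / 2) * (1 + t) * y t * (-(μ / (1 + t)) * deriv y t - c t * y t)) +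
        (1 + (μ - 2) / 2) * (1 + 2 * ((μ - 2) / 2)) / 2 * (2 * y t ^ 1 * deriv y t) +
        ((2 * (1 + t) ^ 1 * 1 * c t + (1 + t) ^ 2 * deriv c t) * y t ^ 2 +
          (1 + t) ^ 2 * c t * (2 * y t ^ 1 * deriv y t)) / 2 +
        (μ - 2) / 2 * (1 + t) * (deriv y t ^ 2 + c t * y t ^ 2)
      = (1 + t) ^ 2 * deriv c t * (y t) ^ 2 / 2 := by
    field_simp
    ring
  rw [key]
  have := hcdec t ht
  have h2 : (0:ℝ) < (1+t)^2 := by positivity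
  have h3 : (1+t)^2 * deriv c t ≤ 0 := mul_nonpos_of_nonneg_of_nonpos h2.le this
  have h4 : (1+t)^2 * deriv c t * (y t)^2 ≤ 0 :=
    mul_nonpos_of_nonpos_of_nonneg h3 (sq_nonneg (y t))
  linarith
end

section
/- Coercivity of the critical-case energy functional: for μ > 2, κ = (μ−2)/2, and c(t) ≍ (1+t)^{−2} (i.e., c₁(1+t)^{−2} ≤ c(t) ≤ c₂(1+t)^{−2} with 0 < c₁ ≤ c₂), the functional E(t) = (1+t)²(y')²/2 + (1+κ)(1+t) y y' + ((1+κ)(1+2κ)/2) y² + (1+t)² c(t) y²/2 satisfies E(t) ≍ (1+t)² (y')² + y², uniformly in t ≥ 0 and y, y' ∈ ℝ, with equivalence constants depending only on κ, c₁, c₂. -/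
open Real

set_option maxHeartbeats 1000000 in
/-- Coercivity of the critical-case energy functional. -/
theorem stmt_15 (μ c₁ c₂ : ℝ) (hμ : 2 < μ) (hc₁ : 0 < c₁) (hc₁₂ : c₁ ≤ c₂)
    (c : ℝ → ℝ)
    (hc : ∀ t : ℝ, 0 ≤ t →
      c₁ * (1 + t) ^ (-(2:ℝ)) ≤ c t ∧ c t ≤ c₂ * (1 + t) ^ (-(2:ℝ))) :
    ∃ m M : ℝ, 0 < m ∧ 0 < M ∧ ∀ t : ℝ, 0 ≤ t → ∀ y y' : ℝ,
      m * ((1 + t) ^ 2 * y' ^ 2 + y ^ 2) ≤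
        (1 + t) ^ 2 * y' ^ 2 / 2
          + (1 + (μ - 2) / 2) * (1 + t) * y * y'
          + ((1 + (μ - 2) / 2) * (1 + 2 * ((μ - 2) / 2)) / 2) * y ^ 2
          + (1 + t) ^ 2 * c t * y ^ 2 / 2
      ∧ (1 + t) ^ 2 * y' ^ 2 / 2
          + (1 + (μ - 2) / 2) * (1 + t) * y * y'
          + ((1 + (μ - 2) / 2) * (1 + 2 * ((μ - 2) / 2)) / 2) * y ^ 2
          + (1 + t) ^ 2 * c t * y ^ 2 / 2
        ≤ M * ((1 + t) ^ 2 * y' ^ 2 + y ^ 2) := by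
  have hκ : 0 < (μ - 2) / 2 := by linarith
  set κ : ℝ := (μ - 2) / 2 with hκdef
  set a : ℝ := 1 + κ with hadef
  have ha : 1 < a := by simp [hadef]; linarith
  have hβ : 0 < (a ^ 2 - a + c₁) / 2 := by nlinarith
  have hden : (0:ℝ) < 2 * a ^ 2 + 1 := by nlinarith
  refine ⟨min (1/4) (((a ^ 2 - a + c₁) / 2) / (2 * a ^ 2 + 1)),
    1/2 + a/2 + a * (1 + 2 * κ) / 2 + c₂ / 2, ?_, ?_, ?_⟩
  · exact lt_min (by norm_num) (div_pos hβ hden)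
  · have hc₂ : 0 < c₂ := lt_of_lt_of_le hc₁ hc₁₂
    nlinarith
  · intro t ht y y'
    have h1t : (0:ℝ) < 1 + t := by linarith
    have hP : (0:ℝ) < (1 + t) ^ 2 := by positivity
    have hpow : (1 + t) ^ (-(2:ℝ)) = ((1 + t) ^ 2)⁻¹ := by
      rw [Real.rpow_neg h1t.le, ← Real.rpow_natCast (1 + t) 2]
      norm_num
    obtain ⟨hl, hr⟩ := hc t ht
    rw [hpow, ← div_eq_mul_inv, div_le_iff₀ hP] at hl
    rw [hpow, ← div_eq_mul_inv, le_div_iff₀ hP] at hr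
    -- hl : c₁ ≤ c t * (1+t)^2, hr : c t * (1+t)^2 ≤ c₂
    set u : ℝ := (1 + t) * y' with hudef
    have hu2 : (1 + t) ^ 2 * y' ^ 2 = u ^ 2 := by rw [hudef]; ring
    set γ : ℝ := c t * (1 + t) ^ 2 with hγdef
    have hgoal1 : (1 + t) ^ 2 * c t * y ^ 2 / 2 = γ * y ^ 2 / 2 := by
      rw [hγdef]; ring
    set m : ℝ := min (1/4) (((a ^ 2 - a + c₁) / 2) / (2 * a ^ 2 + 1)) with hmdef
    have hm1 : m ≤ 1/4 := min_le_left _ _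
    have hm2 : m * (2 * a ^ 2 + 1) ≤ (a ^ 2 - a + c₁) / 2 := by
      rw [← le_div_iff₀ hden]
      exact min_le_right _ _
    have hm0 : 0 ≤ m := le_of_lt (lt_min (by norm_num) (div_pos hβ hden))
    clear_value κ a u γ m
    have hcross : a * (1 + t) * y * y' = a * u * y := by rw [hudef]; ring
    rw [hu2, hgoal1, hcross]
    have hcoef : a * (1 + 2 * κ) / 2 = a ^ 2 - a / 2 := by rw [hadef]; ring
    rw [hcoef]
    constructor
    · have key1 : 0 ≤ (1/2 - 2*m) * (u + a*y)^2 := mul_nonneg (by linarith) (sq_nonneg _)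
      have key2 : 0 ≤ m * (u + 2*a*y)^2 := mul_nonneg hm0 (sq_nonneg _)
      have key3 : 0 ≤ ((a^2 - a + γ)/2 - m*(2*a^2+1)) * y^2 :=
        mul_nonneg (by linarith) (sq_nonneg _)
      nlinarith [key1, key2, key3]
    · have hc₂ : 0 < c₂ := lt_of_lt_of_le hc₁ hc₁₂
      have keyu1 : 0 ≤ (a/2) * (u - y)^2 := mul_nonneg (by linarith) (sq_nonneg _)
      have keyu2 : 0 ≤ (a^2 - a/2 + c₂/2) * u^2 := mul_nonneg (by nlinarith) (sq_nonneg _)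
      have keyu3 : 0 ≤ (1/2 + (c₂ - γ)/2) * y^2 := mul_nonneg (by linarith) (sq_nonneg _)
      nlinarith [keyu1, keyu2, keyu3]
end

section
/- Exponentially weighted Gronwall-type decay: let 0 < λ < 1, μ > 0. If y: [0,∞) → ℝ is C¹, y(0) = y₀, and satisfies y'(t) + μ(1+t)^{−λ} y(t) = g(t) with |g(t)| ≤ G(1+t)^{−a} for some a ∈ ℝ, then |y(t)| ≤ |y₀| e^{−(μ/(1−λ))((1+t)^{1−λ} − 1)} + C G (1+t)^{−a+λ} for a constant C = C(μ, λ, a) and all t ≥ 0. -/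
open Real

/-- Exponentially weighted Gronwall-type decay for a damped scalar ODE. -/
theorem stmt_19 (lam μ a G : ℝ) (hlam0 : 0 < lam) (hlam1 : lam < 1) (hμ : 0 < μ)
    (hG : 0 ≤ G)
    (y g : ℝ → ℝ) (y₀ : ℝ) (hy : ContDiff ℝ 1 y) (hg : Continuous g)
    (hy0 : y 0 = y₀)
    (hode : ∀ t : ℝ, 0 ≤ t → deriv y t + μ * (1 + t) ^ (-lam) * y t = g t)
    (hgbd : ∀ t : ℝ, 0 ≤ t → |g t| ≤ G * (1 + t) ^ (-a)) :
    ∃ C : ℝ, 0 < C ∧ ∀ t : ℝ, 0 ≤ t →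
      |y t| ≤ |y₀| * Real.exp (-(μ / (1 - lam)) * ((1 + t) ^ (1 - lam) - 1))
        + C * G * (1 + t) ^ (-a + lam) := by
  have h1l : (0:ℝ) < 1 - lam := by linarith
  set Φ : ℝ → ℝ := fun t => μ / (1 - lam) * ((1 + t) ^ (1 - lam) - 1) with hΦ
  set E : ℝ → ℝ := fun t => Real.exp (Φ t) with hE
  set q : ℝ → ℝ := fun s => (1 + s) ^ (lam - a) with hq
  set f : ℝ → ℝ := fun s => E s * (1 + s) ^ (-a) with hf
  have hpos : ∀ t : ℝ, 0 ≤ t → (0:ℝ) < 1 + t := fun t ht => by linarith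
  -- continuity facts
  have hcontP : ∀ p : ℝ, ContinuousOn (fun s : ℝ => (1 + s) ^ p) (Set.Ici (0:ℝ)) := by
    intro p
    exact ContinuousOn.rpow_const (continuous_const.add continuous_id).continuousOn
      (fun x hx => Or.inl (hpos x hx).ne')
  have hcontΦ : ContinuousOn Φ (Set.Ici (0:ℝ)) :=
    continuousOn_const.mul ((hcontP (1 - lam)).sub continuousOn_const)
  have hcontE : ContinuousOn E (Set.Ici (0:ℝ)) := Real.continuous_exp.comp_continuousOn hcontΦ
  have hcontf : ContinuousOn f (Set.Ici (0:ℝ)) := hcontE.mul (hcontP (-a))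
  have hsub : ∀ u v : ℝ, 0 ≤ u → 0 ≤ v → Set.uIcc u v ⊆ Set.Ici (0:ℝ) := by
    intro u v hu hv x hx
    rcases Set.mem_uIcc.mp hx with ⟨h1, _⟩ | ⟨h1, _⟩ <;> simp only [Set.mem_Ici] <;> linarith
  have hintf : ∀ u v : ℝ, 0 ≤ u → 0 ≤ v → IntervalIntegrable f MeasureTheory.volume u v :=
    fun u v hu hv => (hcontf.mono (hsub u v hu hv)).intervalIntegrable
  have hf0 : ∀ s : ℝ, 0 ≤ s → 0 ≤ f s := by
    intro s hs
    exact mul_nonneg (Real.exp_pos _).le (Real.rpow_nonneg (by linarith) _)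
  -- derivatives
  have hΦd : ∀ t : ℝ, 0 ≤ t → HasDerivAt Φ (μ * (1 + t) ^ (-lam)) t := by
    intro t ht
    have h1 : HasDerivAt (fun s : ℝ => 1 + s) 1 t := (hasDerivAt_id t).const_add 1
    have h2 : HasDerivAt (fun s : ℝ => (1 + s) ^ (1 - lam))
        ((1 - lam) * (1 + t) ^ (1 - lam - 1) * 1) t :=
      (Real.hasDerivAt_rpow_const (Or.inl (hpos t ht).ne')).comp t h1
    have h3 := (h2.sub_const 1).const_mul (μ / (1 - lam))
    refine h3.congr_deriv ?_
    have he : 1 - lam - 1 = -lam := by ring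
    rw [he]
    field_simp
  have hEd : ∀ t : ℝ, 0 ≤ t → HasDerivAt E (E t * (μ * (1 + t) ^ (-lam))) t :=
    fun t ht => (hΦd t ht).exp
  have hyd : ∀ t : ℝ, HasDerivAt y (deriv y t) t :=
    fun t => (hy.differentiable one_ne_zero t).hasDerivAt
  have hE1 : ∀ t : ℝ, 0 ≤ t → 1 ≤ E t := by
    intro t ht
    have h1 : (1:ℝ) ≤ (1 + t) ^ (1 - lam) := by
      calc (1:ℝ) = 1 ^ (1 - lam) := (Real.one_rpow _).symm
        _ ≤ (1 + t) ^ (1 - lam) := Real.rpow_le_rpow zero_le_one (by linarith) h1l.le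
    have h2 : 0 ≤ Φ t := mul_nonneg (div_nonneg hμ.le h1l.le) (by linarith)
    exact Real.one_le_exp h2
  -- Step A : integrating factor identity
  have hA : ∀ t : ℝ, 0 ≤ t → E t * y t = y₀ + ∫ s in (0:ℝ)..t, E s * g s := by
    intro t ht
    have key : (∫ s in (0:ℝ)..t, E s * g s) = E t * y t - E 0 * y 0 := by
      apply intervalIntegral.integral_eq_sub_of_hasDerivAt
      · intro s hs
        rw [Set.uIcc_of_le ht] at hs
        have hs0 : 0 ≤ s := hs.1
        have h1 := (hEd s hs0).mul (hyd s)
        refine h1.congr_deriv ?_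
        rw [← hode s hs0]
        ring
      · exact ((hcontE.mul hg.continuousOn).mono (hsub 0 t le_rfl ht)).intervalIntegrable
    have hE0 : E 0 = 1 := by
      simp [hE, hΦ, Real.one_rpow]
    rw [key, hE0, hy0]
    ring
  -- choice of T
  set T : ℝ := if a ≤ lam then 0 else (2 * (a - lam) / μ) ^ ((1:ℝ) / (1 - lam)) with hT
  have hT0 : 0 ≤ T := by
    rw [hT]
    split
    · exact le_rfl
    · next h =>
      push_neg at h
      exact (Real.rpow_pos_of_pos (div_pos (by linarith) hμ) _).le
  have hr : ∀ s : ℝ, T ≤ s → μ / 2 ≤ μ + (lam - a) * (1 + s) ^ (lam - 1) := by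
    intro s hs
    have hs0 : 0 ≤ s := le_trans hT0 hs
    have hb : (0:ℝ) < 1 + s := by linarith
    by_cases hal : a ≤ lam
    · have h1 : 0 ≤ (lam - a) * (1 + s) ^ (lam - 1) :=
        mul_nonneg (by linarith) (Real.rpow_nonneg hb.le _)
      linarith
    · push_neg at hal
      have hX : (0:ℝ) < 2 * (a - lam) / μ := div_pos (by linarith) hμ
      have hTval : T = (2 * (a - lam) / μ) ^ ((1:ℝ) / (1 - lam)) := by
        rw [hT, if_neg (not_le.mpr hal)]
      have h2 : T ^ (1 - lam) ≤ (1 + s) ^ (1 - lam) :=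
        Real.rpow_le_rpow hT0 (by linarith) h1l.le
      have h3 : T ^ (1 - lam) = 2 * (a - lam) / μ := by
        rw [hTval, ← Real.rpow_mul hX.le]
        have he : (1:ℝ) / (1 - lam) * (1 - lam) = 1 := by field_simp
        rw [he, Real.rpow_one]
      have h6 : 2 * (a - lam) / μ ≤ (1 + s) ^ (1 - lam) := h3 ▸ h2
      have h5 : (0:ℝ) < (1 + s) ^ (1 - lam) := Real.rpow_pos_of_pos hb _
      have h4 : (1 + s) ^ (lam - 1) = ((1 + s) ^ (1 - lam))⁻¹ := by
        rw [← Real.rpow_neg hb.le]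
        congr 1
        ring
      rw [h4]
      have h7 : 2 * (a - lam) ≤ μ * (1 + s) ^ (1 - lam) := by
        rw [div_le_iff₀ hμ] at h6
        linarith [h6]
      have h8 : ((1 + s) ^ (1 - lam))⁻¹ * ((1 + s) ^ (1 - lam)) = 1 :=
        inv_mul_cancel₀ h5.ne'
      have h9 : 0 < ((1 + s) ^ (1 - lam))⁻¹ := inv_pos.mpr h5
      nlinarith [mul_le_mul_of_nonneg_left h7 h9.le]
  -- constants
  set M : ℝ := ∫ s in (0:ℝ)..T, f s with hM
  set qm : ℝ := (1 + T) ^ (-|lam - a|) with hqm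
  have hqmpos : 0 < qm := Real.rpow_pos_of_pos (by linarith) _
  set C : ℝ := max (2 / μ) (M / qm) with hC
  have hCpos : 0 < C := lt_of_lt_of_le (by positivity) (le_max_left _ _)
  have hCμ : 1 ≤ C * (μ / 2) := by
    have h1 : 2 / μ ≤ C := le_max_left _ _
    have := mul_le_mul_of_nonneg_right h1 (by positivity : (0:ℝ) ≤ μ / 2)
    calc (1:ℝ) = 2 / μ * (μ / 2) := by field_simp
      _ ≤ C * (μ / 2) := this
  have hMC : M ≤ C * qm := by
    have h1 : M / qm ≤ C := le_max_right _ _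
    calc M = M / qm * qm := by field_simp
      _ ≤ C * qm := mul_le_mul_of_nonneg_right h1 hqmpos.le
  -- lower bound on q on [0,T]
  have hq1 : ∀ u : ℝ, 0 ≤ u → u ≤ T → qm ≤ q u := by
    intro u hu huT
    have hb : (0:ℝ) < 1 + u := by linarith
    have s1 : (1 + T) ^ (-|lam - a|) ≤ (1 + u) ^ (-|lam - a|) :=
      Real.rpow_le_rpow_of_nonpos hb (by linarith) (neg_nonpos.mpr (abs_nonneg _))
    have s2 : (1 + u) ^ (-|lam - a|) ≤ (1 + u) ^ (lam - a) :=
      Real.rpow_le_rpow_of_exponent_le (by linarith) (neg_abs_le _)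
    exact s1.trans s2
  have hq0 : ∀ u : ℝ, 0 ≤ u → 0 ≤ q u := fun u hu => Real.rpow_nonneg (by linarith) _
  -- bound at compact-range points
  have hcompact : ∀ u : ℝ, 0 ≤ u → u ≤ T → M ≤ C * (E u * q u) := by
    intro u hu huT
    have h1 : qm ≤ q u := hq1 u hu huT
    have h2 : 1 ≤ E u := hE1 u hu
    have h3 : C * qm ≤ C * q u := mul_le_mul_of_nonneg_left h1 hCpos.le
    have h4 : C * q u ≤ C * (E u * q u) := by
      have := mul_le_mul_of_nonneg_right h2 (hq0 u hu)
      nlinarith [hCpos.le]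
    linarith [hMC]
  -- derivative of C * (E * q)
  have hEqd : ∀ s : ℝ, 0 ≤ s → HasDerivAt (fun u => C * (E u * q u))
      (C * (f s * (μ + (lam - a) * (1 + s) ^ (lam - 1)))) s := by
    intro s hs
    have hb : (0:ℝ) < 1 + s := by linarith
    have h0 : HasDerivAt (fun u : ℝ => 1 + u) 1 s := (hasDerivAt_id s).const_add 1
    have h1 : HasDerivAt (fun u : ℝ => (1 + u) ^ (lam - a))
        ((lam - a) * (1 + s) ^ (lam - a - 1) * 1) s :=
      (Real.hasDerivAt_rpow_const (Or.inl hb.ne')).comp s h0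
    have h2 := ((hEd s hs).mul h1).const_mul C
    refine h2.congr_deriv ?_
    symm
    have e1 : (1 + s) ^ (-lam) * (1 + s) ^ (lam - a) = (1 + s) ^ (-a) := by
      rw [← Real.rpow_add hb]
      congr 1
      ring
    have e2 : (1 + s) ^ (lam - a - 1) = (1 + s) ^ (-a) * (1 + s) ^ (lam - 1) := by
      rw [← Real.rpow_add hb]
      congr 1
      ring
    simp only [hf, hq, mul_one]
    linear_combination (-(C * E s * μ)) * e1 - (C * E s * (lam - a)) * e2
  -- Step C : the integral bound
  have hJle : ∀ t : ℝ, 0 ≤ t → (∫ s in (0:ℝ)..t, f s) ≤ C * (E t * q t) := by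
    intro t ht
    rcases le_or_gt t T with hcase | hcase
    · -- t ≤ T : direct bound
      have hJt : (∫ s in (0:ℝ)..t, f s) ≤ M := by
        have hsplit : (∫ s in (0:ℝ)..t, f s) + (∫ s in t..T, f s) = M :=
          intervalIntegral.integral_add_adjacent_intervals (hintf 0 t le_rfl ht)
            (hintf t T ht hT0)
        have hnn : 0 ≤ ∫ s in t..T, f s :=
          intervalIntegral.integral_nonneg hcase (fun u hu => hf0 u (le_trans ht hu.1))
        linarith
      linarith [hcompact t ht hcase]
    · -- T ≤ t
      have hTt : T ≤ t := hcase.le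
      have key : (∫ s in T..t, C * (f s * (μ + (lam - a) * (1 + s) ^ (lam - 1))))
          = C * (E t * q t) - C * (E T * q T) := by
        apply intervalIntegral.integral_eq_sub_of_hasDerivAt
        · intro s hs
          rw [Set.uIcc_of_le hTt] at hs
          exact hEqd s (le_trans hT0 hs.1)
        · have hcont : ContinuousOn
              (fun s => C * (f s * (μ + (lam - a) * (1 + s) ^ (lam - 1)))) (Set.Ici (0:ℝ)) :=
            continuousOn_const.mul (hcontf.mul (continuousOn_const.add
              (continuousOn_const.mul (hcontP (lam - 1)))))
          exact (hcont.mono (hsub T t hT0 ht)).intervalIntegrable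
      have hmono : (∫ s in T..t, f s)
          ≤ ∫ s in T..t, C * (f s * (μ + (lam - a) * (1 + s) ^ (lam - 1))) := by
        apply intervalIntegral.integral_mono_on hTt (hintf T t hT0 ht)
        · have hcont : ContinuousOn
              (fun s => C * (f s * (μ + (lam - a) * (1 + s) ^ (lam - 1)))) (Set.Ici (0:ℝ)) :=
            continuousOn_const.mul (hcontf.mul (continuousOn_const.add
              (continuousOn_const.mul (hcontP (lam - 1)))))
          exact (hcont.mono (hsub T t hT0 ht)).intervalIntegrable
        · intro s hs
          have hs0 : 0 ≤ s := le_trans hT0 hs.1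
          have hrs := hr s hs.1
          have hfs := hf0 s hs0
          calc f s = f s * 1 := (mul_one _).symm
            _ ≤ f s * (C * (μ / 2)) := mul_le_mul_of_nonneg_left hCμ hfs
            _ = C * (f s * (μ / 2)) := by ring
            _ ≤ C * (f s * (μ + (lam - a) * (1 + s) ^ (lam - 1))) := by
                apply mul_le_mul_of_nonneg_left _ hCpos.le
                exact mul_le_mul_of_nonneg_left hrs hfs
      have hsplit : M + (∫ s in T..t, f s) = ∫ s in (0:ℝ)..t, f s :=
        intervalIntegral.integral_add_adjacent_intervals (hintf 0 T le_rfl hT0)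
          (hintf T t hT0 ht)
      have hJT : M ≤ C * (E T * q T) := hcompact T hT0 le_rfl
      linarith [key ▸ hmono]
  -- Final assembly
  refine ⟨C, hCpos, ?_⟩
  intro t ht
  have hEt : 0 < E t := Real.exp_pos _
  have habs : |E t * y t| ≤ |y₀| + G * ∫ s in (0:ℝ)..t, f s := by
    rw [hA t ht]
    refine (abs_add_le _ _).trans ?_
    have h1 : |∫ s in (0:ℝ)..t, E s * g s| ≤ ∫ s in (0:ℝ)..t, |E s * g s| :=
      intervalIntegral.abs_integral_le_integral_abs ht
    have h2 : (∫ s in (0:ℝ)..t, |E s * g s|) ≤ ∫ s in (0:ℝ)..t, G * f s := by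
      apply intervalIntegral.integral_mono_on ht
      · exact (((hcontE.mul hg.continuousOn).mono (hsub 0 t le_rfl ht)).abs).intervalIntegrable
      · exact ((continuousOn_const.mul hcontf).mono (hsub 0 t le_rfl ht)).intervalIntegrable
      · intro s hs
        have hs0 : 0 ≤ s := hs.1
        have hEs : 0 < E s := Real.exp_pos _
        calc |E s * g s| = E s * |g s| := by rw [abs_mul, abs_of_pos hEs]
          _ ≤ E s * (G * (1 + s) ^ (-a)) :=
              mul_le_mul_of_nonneg_left (hgbd s hs0) hEs.le
          _ = G * f s := by simp only [hf]; ring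
    have h3 : (∫ s in (0:ℝ)..t, G * f s) = G * ∫ s in (0:ℝ)..t, f s :=
      intervalIntegral.integral_const_mul _ _
    rw [h3] at h2
    linarith
  have hexp : Real.exp (-(μ / (1 - lam)) * ((1 + t) ^ (1 - lam) - 1)) = (E t)⁻¹ := by
    rw [hE, ← Real.exp_neg]
    congr 1
    simp only [hΦ]
    ring
  have hqe : (1 + t) ^ (-a + lam) = q t := by
    simp only [hq]
    congr 1
    ring
  rw [hexp, hqe]
  have hJ := hJle t ht
  have h4 : G * (∫ s in (0:ℝ)..t, f s) ≤ C * G * (E t * q t) := by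
    have := mul_le_mul_of_nonneg_left hJ hG
    nlinarith [this]
  have h3 : |y t| * E t ≤ |y₀| + C * G * (E t * q t) := by
    have h5 : |y t| * E t = |E t * y t| := by
      rw [abs_mul, abs_of_pos hEt]; ring
    rw [h5]
    linarith [habs]
  rw [← mul_le_mul_iff_of_pos_right hEt]
  have expand : (|y₀| * (E t)⁻¹ + C * G * q t) * E t = |y₀| + C * G * (E t * q t) := by
    field_simp
  rw [expand]
  exact h3
end
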